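/- For any positive masses m₁, m₂, m₃, m₄, there exists exactly one r ∈ (0,∞)⁶ with I(r) = 1 and P(r) = 0 for which there exist real numbers λ, σ satisfying the co-circular central configuration equations; that is, the restriction of the Newtonian potential U to 𝓜⁺ has a unique critical point. -/

import Mathlib

/-- The Ptolemy function `P` as a function of
`r = (r₁₂, r₁₃, r₁₄, r₂₃, r₂₄, r₃₄) ∈ ℝ⁶`. -/
def Pvec (r : Fin 6 → ℝ) : ℝ :=
  r 0 * r 5 + r 2 * r 3 - r 1 * r 4

/-- The moment of inertia `I` as a function of `r ∈ ℝ⁶`. -/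
noncomputable def Ivec (m1 m2 m3 m4 : ℝ) (r : Fin 6 → ℝ) : ℝ :=
  (1/(2*(m1 + m2 + m3 + m4))) *
    (m1*m2*(r 0)^2 + m1*m3*(r 1)^2 + m1*m4*(r 2)^2 +
     m2*m3*(r 3)^2 + m2*m4*(r 4)^2 + m3*m4*(r 5)^2)

/-- The co-circular central configuration equations, with multipliers
`lam`, `sig`, for `r = (r₁₂, r₁₃, r₁₄, r₂₃, r₂₄, r₃₄) ∈ ℝ⁶`. -/
def cocircularCCEqns (m1 m2 m3 m4 : ℝ) (r : Fin 6 → ℝ) (lam sig : ℝ) : Prop :=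
  m1*m2*(1/(r 0)^3 - lam) = sig * (r 5 / r 0) ∧
  m3*m4*(1/(r 5)^3 - lam) = sig * (r 0 / r 5) ∧
  m1*m3*(1/(r 1)^3 - lam) = -sig * (r 4 / r 1) ∧
  m2*m4*(1/(r 4)^3 - lam) = -sig * (r 1 / r 4) ∧
  m1*m4*(1/(r 2)^3 - lam) = sig * (r 3 / r 2) ∧
  m2*m3*(1/(r 3)^3 - lam) = sig * (r 2 / r 3)


open Real Set Filter Topology

noncomputable section

namespace CoCirc


/-- `gg x = 1/x³ - 1`. -/
def gg (x : ℝ) : ℝ := 1 / x ^ 3 - 1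

/-- `phi x = 1/x - x²`. -/
def phi (x : ℝ) : ℝ := 1 / x - x ^ 2

lemma gg_one : gg 1 = 0 := by norm_num [gg]

lemma phi_one : phi 1 = 0 := by norm_num [phi]

lemma gg_anti : StrictAntiOn gg (Ioi 0) := by
  intro x hx y hy hxy
  simp only [gg, mem_Ioi] at *
  have h3 : x ^ 3 < y ^ 3 := pow_lt_pow_left₀ hxy hx.le (by norm_num)
  have : 1 / y ^ 3 < 1 / x ^ 3 :=
    one_div_lt_one_div_of_lt (by positivity) h3
  linarith

lemma phi_anti : StrictAntiOn phi (Ioi 0) := by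
  intro x hx y hy hxy
  simp only [phi, mem_Ioi] at *
  have h2 : x ^ 2 < y ^ 2 := by nlinarith
  have : 1 / y < 1 / x := one_div_lt_one_div_of_lt hx hxy
  linarith

lemma gg_pos {x : ℝ} (h0 : 0 < x) (h1 : x < 1) : 0 < gg x := by
  have := gg_anti (mem_Ioi.2 h0) (mem_Ioi.2 one_pos) h1
  rwa [gg_one] at this

lemma gg_neg {x : ℝ} (h1 : 1 < x) : gg x < 0 := by
  have := gg_anti (mem_Ioi.2 one_pos) (mem_Ioi.2 (lt_trans one_pos h1)) h1
  rwa [gg_one] at this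

lemma phi_pos {x : ℝ} (h0 : 0 < x) (h1 : x < 1) : 0 < phi x := by
  have := phi_anti (mem_Ioi.2 h0) (mem_Ioi.2 one_pos) h1
  rwa [phi_one] at this

lemma phi_neg {x : ℝ} (h1 : 1 < x) : phi x < 0 := by
  have := phi_anti (mem_Ioi.2 one_pos) (mem_Ioi.2 (lt_trans one_pos h1)) h1
  rwa [phi_one] at this

lemma phi_eq_sq_gg {x : ℝ} (hx : x ≠ 0) : phi x = x ^ 2 * gg x := by
  unfold phi gg; field_simp

/-- `phi x ≤ gg x` on `(0,1]`. -/
lemma phi_le_gg {x : ℝ} (h0 : 0 < x) (h1 : x ≤ 1) : phi x ≤ gg x := by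
  have key : gg x - phi x = (1 - x ^ 3) * (1 - x ^ 2) / x ^ 3 := by
    unfold gg phi; field_simp
  have h3 : x ^ 3 ≤ 1 := by nlinarith
  have h2 : x ^ 2 ≤ 1 := by nlinarith
  have hnum : 0 ≤ (1 - x ^ 3) * (1 - x ^ 2) := by nlinarith
  have : 0 ≤ (1 - x ^ 3) * (1 - x ^ 2) / x ^ 3 := by
    apply div_nonneg hnum (by positivity)
  linarith

/-- from `x ∈ (0,1]` : `1 - phi x ≤ x`. -/
lemma one_sub_phi_le {x : ℝ} (h0 : 0 < x) (h1 : x ≤ 1) : 1 - phi x ≤ x := by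
  have : phi x = (1 - x ^ 3) / x := by unfold phi; field_simp
  rw [this]
  have h : 1 - x ≤ (1 - x ^ 3) / x := by
    rw [le_div_iff₀ h0]; nlinarith [sq_nonneg x]
  linarith

/-! ### The inverse `psi` of `phi` -/

/-- An auxiliary strictly monotone surjection `ℝ → ℝ`, `u ↦ exp (2u) - exp (-u) = -phi (exp u)`. -/
def phiAux (u : ℝ) : ℝ := exp (2 * u) - exp (-u)

lemma phiAux_strictMono : StrictMono phiAux := by
  intro x y hxy
  have h1 : exp (2 * x) < exp (2 * y) := exp_lt_exp.2 (by linarith)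
  have h2 : exp (-y) < exp (-x) := exp_lt_exp.2 (by linarith)
  simp only [phiAux]; linarith

lemma phiAux_continuous : Continuous phiAux := by
  unfold phiAux; fun_prop

lemma phiAux_surjective : Function.Surjective phiAux := by
  apply phiAux_continuous.surjective
  · have h2u : Tendsto (fun u : ℝ => 2 * u) atTop atTop :=
      tendsto_atTop_mono' atTop
        (by filter_upwards [eventually_ge_atTop (0:ℝ)] with u hu; simp only [id_eq]; linarith)
        tendsto_id
    have h1 : Tendsto (fun u : ℝ => exp (2 * u)) atTop atTop :=
      tendsto_exp_atTop.comp h2u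
    have h2 : Tendsto (fun u : ℝ => exp (-u)) atTop (𝓝 0) :=
      Real.tendsto_exp_atBot.comp tendsto_neg_atTop_atBot
    unfold phiAux; simpa [sub_eq_add_neg] using h1.atTop_add h2.neg
  · have h2u : Tendsto (fun u : ℝ => 2 * u) atBot atBot :=
      tendsto_atBot_mono' atBot
        (by filter_upwards [eventually_le_atBot (0:ℝ)] with u hu; simp only [id_eq]; linarith)
        tendsto_id
    have h1 : Tendsto (fun u : ℝ => exp (2 * u)) atBot (𝓝 0) :=
      Real.tendsto_exp_atBot.comp h2u
    have h2 : Tendsto (fun u : ℝ => -exp (-u)) atBot atBot := by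
      apply tendsto_neg_atBot_iff.mpr
      exact tendsto_exp_atTop.comp tendsto_neg_atBot_atTop
    unfold phiAux; simpa [sub_eq_add_neg] using h1.add_atBot h2

/-- the order isomorphism determined by `phiAux`. -/
def phiIso : ℝ ≃o ℝ := StrictMono.orderIsoOfSurjective phiAux phiAux_strictMono phiAux_surjective

lemma phiIso_symm_phiAux (a : ℝ) : phiIso.symm (phiAux a) = a :=
  StrictMono.orderIsoOfSurjective_symm_apply_self phiAux phiAux_strictMono phiAux_surjective a

lemma phiAux_phiIso_symm (b : ℝ) : phiAux (phiIso.symm b) = b :=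
  StrictMono.orderIsoOfSurjective_self_symm_apply phiAux phiAux_strictMono phiAux_surjective b

/-- `psi : ℝ → ℝ`, the inverse of `phi` viewed as a bijection `(0,∞) → ℝ`. -/
def psi (t : ℝ) : ℝ := exp (phiIso.symm (-t))

lemma psi_pos (t : ℝ) : 0 < psi t := exp_pos _

lemma phi_psi (t : ℝ) : phi (psi t) = t := by
  have h : phiAux (phiIso.symm (-t)) = -t := phiAux_phiIso_symm _
  set u := phiIso.symm (-t) with hu
  have e2 : rexp (2 * u) = rexp u ^ 2 := by rw [two_mul, Real.exp_add]; ring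
  have e1 : rexp (-u) = 1 / rexp u := by rw [Real.exp_neg, one_div]
  simp only [phiAux, e1, e2] at h
  simp only [psi, phi, ← hu]
  linarith

lemma psi_strictAnti : StrictAnti psi := by
  intro x y hxy
  have : phiIso.symm (-y) < phiIso.symm (-x) := by
    apply phiIso.symm.strictMono
    linarith
  exact exp_lt_exp.2 this

lemma psi_continuous : Continuous psi :=
  continuous_exp.comp (phiIso.symm.continuous.comp continuous_neg)

lemma psi_zero : psi 0 = 1 := by
  have h0 : phiAux 0 = 0 := by simp [phiAux]
  have h1 := phiIso_symm_phiAux 0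
  rw [h0] at h1
  have : phiIso.symm (-(0:ℝ)) = 0 := by rw [neg_zero]; exact h1
  simp [psi, h1]

lemma psi_lt_one {t : ℝ} (ht : 0 < t) : psi t < 1 := by
  calc psi t < psi 0 := psi_strictAnti ht
  _ = 1 := psi_zero

lemma one_lt_psi {t : ℝ} (ht : t < 0) : 1 < psi t := by
  calc 1 = psi 0 := psi_zero.symm
  _ < psi t := psi_strictAnti ht




/-! ### sign helpers -/

lemma gg_sign_lt {x : ℝ} (hx : 0 < x) (h : 0 < gg x) : x < 1 := by
  by_contra hc
  push_neg at hc
  rcases eq_or_lt_of_le hc with h1 | h1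
  · rw [← h1, gg_one] at h; exact lt_irrefl 0 h
  · linarith [gg_neg h1]

lemma gg_sign_gt {x : ℝ} (hx : 0 < x) (h : gg x < 0) : 1 < x := by
  by_contra hc
  push_neg at hc
  rcases eq_or_lt_of_le hc with h1 | h1
  · rw [h1, gg_one] at h; exact lt_irrefl 0 h
  · linarith [gg_pos hx h1]

lemma gg_sign_eq {x : ℝ} (hx : 0 < x) (h : gg x = 0) : x = 1 := by
  rcases lt_trichotomy x 1 with h1 | h1 | h1
  · linarith [gg_pos hx h1]
  · exact h1
  · linarith [gg_neg h1]

lemma pos_of_mul_pos_left {m t : ℝ} (hm : 0 < m) (h : 0 < m * t) : 0 < t := by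
  by_contra hc; push_neg at hc; nlinarith

lemma neg_of_mul_neg_left {m t : ℝ} (hm : 0 < m) (h : m * t < 0) : t < 0 := by
  by_contra hc; push_neg at hc; nlinarith

lemma zero_of_mul_zero_left {m t : ℝ} (hm : 0 < m) (h : m * t = 0) : t = 0 := by
  rcases mul_eq_zero.mp h with h1 | h1
  · exact absurd h1 hm.ne'
  · exact h1

/-! ### pair relations -/

/-- From the two central-configuration equations of a pair (with `lam = 1`),
derive the `phi`-relation and the product relation. -/
lemma pair_relations {p q x y s : ℝ} (hx : 0 < x) (hy : 0 < y)
    (h1 : p * (1 / x ^ 3 - 1) = s * (y / x))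
    (h2 : q * (1 / y ^ 3 - 1) = s * (x / y)) :
    p * phi x = s * (x * y) ∧ q * phi y = s * (x * y) ∧
      p * q * (gg x * gg y) = s ^ 2 := by
  have hx0 : x ≠ 0 := hx.ne'
  have hy0 : y ≠ 0 := hy.ne'
  have hphix : phi x = x ^ 2 * (1 / x ^ 3 - 1) := by unfold phi; field_simp
  have hphiy : phi y = y ^ 2 * (1 / y ^ 3 - 1) := by unfold phi; field_simp
  refine ⟨?_, ?_, ?_⟩
  · calc p * phi x = x ^ 2 * (p * (1 / x ^ 3 - 1)) := by rw [hphix]; ring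
    _ = x ^ 2 * (s * (y / x)) := by rw [h1]
    _ = s * (x * y) := by field_simp
  · calc q * phi y = y ^ 2 * (q * (1 / y ^ 3 - 1)) := by rw [hphiy]; ring
    _ = y ^ 2 * (s * (x / y)) := by rw [h2]
    _ = s * (x * y) := by field_simp
  · calc p * q * (gg x * gg y)
        = (p * (1 / x ^ 3 - 1)) * (q * (1 / y ^ 3 - 1)) := by unfold gg; ring
    _ = (s * (y / x)) * (s * (x / y)) := by rw [h1, h2]
    _ = s ^ 2 := by field_simp

/-- strict monotone transfer within a pair linked by the phi-relation. -/
lemma pair_mono {p q a f a' f' : ℝ} (hp : 0 < p) (hq : 0 < q)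
    (ha : 0 < a) (hf : 0 < f) (ha' : 0 < a') (hf' : 0 < f')
    (rel : p * phi a = q * phi f) (rel' : p * phi a' = q * phi f')
    (hlt : a < a') : f < f' := by
  have h1 : phi a' < phi a := phi_anti (mem_Ioi.2 ha) (mem_Ioi.2 ha') hlt
  by_contra hc
  push_neg at hc
  have hle : phi f ≤ phi f' := by
    rcases eq_or_lt_of_le hc with heq | hlt2
    · rw [heq]
    · exact (phi_anti (mem_Ioi.2 hf') (mem_Ioi.2 hf) hlt2).le
  have h2 : q * phi f ≤ q * phi f' := mul_le_mul_of_nonneg_left hle hq.le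
  rw [← rel, ← rel'] at h2
  have h3 : phi a ≤ phi a' := le_of_mul_le_mul_left h2 hp
  linarith

/-- For a "sides" pair (both in `(0,1)`), increasing `a` strictly decreases the product. -/
lemma side_prod_lt {p q a f a' f' : ℝ} (hp : 0 < p) (hq : 0 < q)
    (ha : 0 < a) (ha1 : a < 1) (hf : 0 < f) (hf1 : f < 1)
    (ha' : 0 < a') (ha1' : a' < 1) (hf' : 0 < f') (hf1' : f' < 1)
    (rel : p * phi a = q * phi f) (rel' : p * phi a' = q * phi f')
    (hlt : a < a') : gg a' * gg f' < gg a * gg f := by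
  have hff : f < f' := pair_mono hp hq ha hf ha' hf' rel rel' hlt
  have g1 : gg a' < gg a := gg_anti (mem_Ioi.2 ha) (mem_Ioi.2 ha') hlt
  have g2 : gg f' < gg f := gg_anti (mem_Ioi.2 hf) (mem_Ioi.2 hf') hff
  have := mul_lt_mul'' g1 g2 (gg_pos ha' ha1').le (gg_pos hf' hf1').le
  exact this

/-- For a "diagonal" pair (both in `(1,∞)`), increasing `b` strictly increases the product. -/
lemma diag_prod_lt {p q b e b' e' : ℝ} (hp : 0 < p) (hq : 0 < q)
    (hb : 1 < b) (he : 1 < e) (hb' : 1 < b') (he' : 1 < e')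
    (rel : p * phi b = q * phi e) (rel' : p * phi b' = q * phi e')
    (hlt : b < b') : gg b * gg e < gg b' * gg e' := by
  have hb0 : (0:ℝ) < b := lt_trans one_pos hb
  have he0 : (0:ℝ) < e := lt_trans one_pos he
  have hb0' : (0:ℝ) < b' := lt_trans one_pos hb'
  have he0' : (0:ℝ) < e' := lt_trans one_pos he'
  have hee : e < e' := pair_mono hp hq hb0 he0 hb0' he0' rel rel' hlt
  have g1 : gg b' < gg b := gg_anti (mem_Ioi.2 hb0) (mem_Ioi.2 hb0') hlt
  have g2 : gg e' < gg e := gg_anti (mem_Ioi.2 he0) (mem_Ioi.2 he0') hee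
  have h1 : -gg b < -gg b' := by linarith
  have h2 : -gg e < -gg e' := by linarith
  have := mul_lt_mul'' h1 h2 (by linarith [gg_neg hb]) (by linarith [gg_neg he])
  nlinarith [this]

/-! ### bounds for `lam = 1` solutions -/

lemma lam1_bounds {m1 m2 m3 m4 : ℝ}
    (hm1 : 0 < m1) (hm2 : 0 < m2) (hm3 : 0 < m3) (hm4 : 0 < m4)
    {r : Fin 6 → ℝ} {s : ℝ} (hr : ∀ i, 0 < r i) (hP : Pvec r = 0)
    (h : cocircularCCEqns m1 m2 m3 m4 r 1 s) :
    0 < s ∧ r 0 < 1 ∧ r 2 < 1 ∧ r 3 < 1 ∧ r 5 < 1 ∧ 1 < r 1 ∧ 1 < r 4 := by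
  obtain ⟨h1, h2, h3, h4, h5, h6⟩ := h
  have H1 : m1*m2*gg (r 0) = s * (r 5 / r 0) := h1
  have H2 : m3*m4*gg (r 5) = s * (r 0 / r 5) := h2
  have H3 : m1*m3*gg (r 1) = -s * (r 4 / r 1) := h3
  have H4 : m2*m4*gg (r 4) = -s * (r 1 / r 4) := h4
  have H5 : m1*m4*gg (r 2) = s * (r 3 / r 2) := h5
  have H6 : m2*m3*gg (r 3) = s * (r 2 / r 3) := h6
  clear h1 h2 h3 h4 h5 h6
  have h05 : 0 < r 5 / r 0 := div_pos (hr 5) (hr 0)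
  have h50 : 0 < r 0 / r 5 := div_pos (hr 0) (hr 5)
  have h41 : 0 < r 4 / r 1 := div_pos (hr 4) (hr 1)
  have h14 : 0 < r 1 / r 4 := div_pos (hr 1) (hr 4)
  have h32 : 0 < r 3 / r 2 := div_pos (hr 3) (hr 2)
  have h23 : 0 < r 2 / r 3 := div_pos (hr 2) (hr 3)
  rcases lt_trichotomy s 0 with hs | hs | hs
  · -- s < 0 : contradiction with P = 0
    exfalso
    have g0 : 1 < r 0 := gg_sign_gt (hr 0) (neg_of_mul_neg_left (mul_pos hm1 hm2)
      (by rw [H1]; exact mul_neg_of_neg_of_pos hs h05))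
    have g5 : 1 < r 5 := gg_sign_gt (hr 5) (neg_of_mul_neg_left (mul_pos hm3 hm4)
      (by rw [H2]; exact mul_neg_of_neg_of_pos hs h50))
    have g2' : 1 < r 2 := gg_sign_gt (hr 2) (neg_of_mul_neg_left (mul_pos hm1 hm4)
      (by rw [H5]; exact mul_neg_of_neg_of_pos hs h32))
    have g3 : 1 < r 3 := gg_sign_gt (hr 3) (neg_of_mul_neg_left (mul_pos hm2 hm3)
      (by rw [H6]; exact mul_neg_of_neg_of_pos hs h23))
    have g1 : r 1 < 1 := gg_sign_lt (hr 1) (pos_of_mul_pos_left (mul_pos hm1 hm3)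
      (by rw [H3]; exact mul_pos (by linarith) h41))
    have g4 : r 4 < 1 := gg_sign_lt (hr 4) (pos_of_mul_pos_left (mul_pos hm2 hm4)
      (by rw [H4]; exact mul_pos (by linarith) h14))
    have : 0 < Pvec r := by
      unfold Pvec
      nlinarith [hr 0, hr 1, hr 2, hr 3, hr 4, hr 5]
    linarith [hP]
  · -- s = 0 : all distances equal 1, P = 1, contradiction
    exfalso
    subst hs
    have g0 : r 0 = 1 := gg_sign_eq (hr 0) (zero_of_mul_zero_left (mul_pos hm1 hm2)
      (by rw [H1]; ring))
    have g5 : r 5 = 1 := gg_sign_eq (hr 5) (zero_of_mul_zero_left (mul_pos hm3 hm4)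
      (by rw [H2]; ring))
    have g2' : r 2 = 1 := gg_sign_eq (hr 2) (zero_of_mul_zero_left (mul_pos hm1 hm4)
      (by rw [H5]; ring))
    have g3 : r 3 = 1 := gg_sign_eq (hr 3) (zero_of_mul_zero_left (mul_pos hm2 hm3)
      (by rw [H6]; ring))
    have g1 : r 1 = 1 := gg_sign_eq (hr 1) (zero_of_mul_zero_left (mul_pos hm1 hm3)
      (by rw [H3]; ring))
    have g4 : r 4 = 1 := gg_sign_eq (hr 4) (zero_of_mul_zero_left (mul_pos hm2 hm4)
      (by rw [H4]; ring))
    unfold Pvec at hP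
    rw [g0, g1, g2', g3, g4, g5] at hP
    norm_num at hP
  · -- s > 0 : the desired bounds
    refine ⟨hs, ?_, ?_, ?_, ?_, ?_, ?_⟩
    · exact gg_sign_lt (hr 0) (pos_of_mul_pos_left (mul_pos hm1 hm2)
        (by rw [H1]; exact mul_pos hs h05))
    · exact gg_sign_lt (hr 2) (pos_of_mul_pos_left (mul_pos hm1 hm4)
        (by rw [H5]; exact mul_pos hs h32))
    · exact gg_sign_lt (hr 3) (pos_of_mul_pos_left (mul_pos hm2 hm3)
        (by rw [H6]; exact mul_pos hs h23))
    · exact gg_sign_lt (hr 5) (pos_of_mul_pos_left (mul_pos hm3 hm4)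
        (by rw [H2]; exact mul_pos hs h50))
    · exact gg_sign_gt (hr 1) (neg_of_mul_neg_left (mul_pos hm1 hm3)
        (by rw [H3]; exact mul_neg_of_neg_of_pos (by linarith) h41))
    · exact gg_sign_gt (hr 4) (neg_of_mul_neg_left (mul_pos hm2 hm4)
        (by rw [H4]; exact mul_neg_of_neg_of_pos (by linarith) h14))

/-! ### uniqueness of the `lam = 1` solution -/

set_option maxHeartbeats 1000000 in
lemma lam1_lt_false {m1 m2 m3 m4 : ℝ}
    (hm1 : 0 < m1) (hm2 : 0 < m2) (hm3 : 0 < m3) (hm4 : 0 < m4)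
    {r r' : Fin 6 → ℝ} {s s' : ℝ}
    (hr : ∀ i, 0 < r i) (hr' : ∀ i, 0 < r' i)
    (hP : Pvec r = 0) (hP' : Pvec r' = 0)
    (h : cocircularCCEqns m1 m2 m3 m4 r 1 s)
    (h' : cocircularCCEqns m1 m2 m3 m4 r' 1 s')
    (hss : s < s') : False := by
  obtain ⟨hs, b0, b2, b3, b5, b1, b4⟩ := lam1_bounds hm1 hm2 hm3 hm4 hr hP h
  obtain ⟨hs', b0', b2', b3', b5', b1', b4'⟩ := lam1_bounds hm1 hm2 hm3 hm4 hr' hP' h'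
  obtain ⟨e1, e2, e3⟩ := pair_relations (hr 0) (hr 5) h.1 h.2.1
  obtain ⟨d1, d2, d3⟩ := pair_relations (hr 1) (hr 4) h.2.2.1 h.2.2.2.1
  obtain ⟨q1, q2, q3⟩ := pair_relations (hr 2) (hr 3) h.2.2.2.2.1 h.2.2.2.2.2
  obtain ⟨e1', e2', e3'⟩ := pair_relations (hr' 0) (hr' 5) h'.1 h'.2.1
  obtain ⟨d1', d2', d3'⟩ := pair_relations (hr' 1) (hr' 4) h'.2.2.1 h'.2.2.2.1
  obtain ⟨q1', q2', q3'⟩ := pair_relations (hr' 2) (hr' 3) h'.2.2.2.2.1 h'.2.2.2.2.2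
  have rel_s : m1 * m2 * phi (r 0) = m3 * m4 * phi (r 5) := e1.trans e2.symm
  have rel_s' : m1 * m2 * phi (r' 0) = m3 * m4 * phi (r' 5) := e1'.trans e2'.symm
  have rel_q : m1 * m4 * phi (r 2) = m2 * m3 * phi (r 3) := q1.trans q2.symm
  have rel_q' : m1 * m4 * phi (r' 2) = m2 * m3 * phi (r' 3) := q1'.trans q2'.symm
  have rel_d : m1 * m3 * phi (r 1) = m2 * m4 * phi (r 4) := d1.trans d2.symm
  have rel_d' : m1 * m3 * phi (r' 1) = m2 * m4 * phi (r' 4) := d1'.trans d2'.symm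
  have hsq : s ^ 2 < s' ^ 2 := by
    have := mul_lt_mul'' hss hss hs.le hs.le
    rw [pow_two, pow_two]; linarith only [this]
  have p12 : 0 < m1 * m2 := mul_pos hm1 hm2
  have p34 : 0 < m3 * m4 := mul_pos hm3 hm4
  have p14 : 0 < m1 * m4 := mul_pos hm1 hm4
  have p23 : 0 < m2 * m3 := mul_pos hm2 hm3
  have p13 : 0 < m1 * m3 := mul_pos hm1 hm3
  have p24 : 0 < m2 * m4 := mul_pos hm2 hm4
  -- sides pair (r 0, r 5)
  have hS : gg (r 0) * gg (r 5) < gg (r' 0) * gg (r' 5) := by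
    have hlt : m1 * m2 * (m3 * m4) * (gg (r 0) * gg (r 5)) <
        m1 * m2 * (m3 * m4) * (gg (r' 0) * gg (r' 5)) := by rw [e3, e3']; exact hsq
    exact lt_of_mul_lt_mul_left hlt (mul_pos p12 p34).le
  have haa : r' 0 < r 0 := by
    rcases lt_trichotomy (r 0) (r' 0) with hlt0 | heq0 | hgt0
    · have := side_prod_lt p12 p34 (hr 0) b0 (hr 5) b5 (hr' 0) b0' (hr' 5) b5'
        rel_s rel_s' hlt0
      linarith only [this, hS]
    · exfalso
      have hphif : phi (r 5) = phi (r' 5) := by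
        have h1 : m3 * m4 * phi (r 5) = m3 * m4 * phi (r' 5) := by
          rw [← rel_s, ← rel_s', heq0]
        exact mul_left_cancel₀ p34.ne' h1
      have hf5 : r 5 = r' 5 := phi_anti.injOn (mem_Ioi.2 (hr 5)) (mem_Ioi.2 (hr' 5)) hphif
      rw [heq0, hf5, e3'] at e3
      linarith only [e3, hsq]
    · exact hgt0
  have hff : r' 5 < r 5 := pair_mono p12 p34 (hr' 0) (hr' 5) (hr 0) (hr 5) rel_s' rel_s haa
  have prod_s : r' 0 * r' 5 < r 0 * r 5 :=
    mul_lt_mul'' haa hff (hr' 0).le (hr' 5).le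
  -- sides pair (r 2, r 3)
  have hQ : gg (r 2) * gg (r 3) < gg (r' 2) * gg (r' 3) := by
    have hlt : m1 * m4 * (m2 * m3) * (gg (r 2) * gg (r 3)) <
        m1 * m4 * (m2 * m3) * (gg (r' 2) * gg (r' 3)) := by rw [q3, q3']; exact hsq
    exact lt_of_mul_lt_mul_left hlt (mul_pos p14 p23).le
  have hcc : r' 2 < r 2 := by
    rcases lt_trichotomy (r 2) (r' 2) with hlt0 | heq0 | hgt0
    · have := side_prod_lt p14 p23 (hr 2) b2 (hr 3) b3 (hr' 2) b2' (hr' 3) b3'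
        rel_q rel_q' hlt0
      linarith only [this, hQ]
    · exfalso
      have hphif : phi (r 3) = phi (r' 3) := by
        have h1 : m2 * m3 * phi (r 3) = m2 * m3 * phi (r' 3) := by
          rw [← rel_q, ← rel_q', heq0]
        exact mul_left_cancel₀ p23.ne' h1
      have hf3 : r 3 = r' 3 := phi_anti.injOn (mem_Ioi.2 (hr 3)) (mem_Ioi.2 (hr' 3)) hphif
      rw [heq0, hf3, q3'] at q3
      linarith only [q3, hsq]
    · exact hgt0
  have hdd : r' 3 < r 3 := pair_mono p14 p23 (hr' 2) (hr' 3) (hr 2) (hr 3) rel_q' rel_q hcc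
  have prod_q : r' 2 * r' 3 < r 2 * r 3 :=
    mul_lt_mul'' hcc hdd (hr' 2).le (hr' 3).le
  -- diagonal pair (r 1, r 4)
  have hD : gg (r 1) * gg (r 4) < gg (r' 1) * gg (r' 4) := by
    have hlt : m1 * m3 * (m2 * m4) * (gg (r 1) * gg (r 4)) <
        m1 * m3 * (m2 * m4) * (gg (r' 1) * gg (r' 4)) := by
      rw [d3, d3']; simpa [neg_sq] using hsq
    exact lt_of_mul_lt_mul_left hlt (mul_pos p13 p24).le
  have hbb : r 1 < r' 1 := by
    rcases lt_trichotomy (r 1) (r' 1) with hlt0 | heq0 | hgt0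
    · exact hlt0
    · exfalso
      have hphif : phi (r 4) = phi (r' 4) := by
        have h1 : m2 * m4 * phi (r 4) = m2 * m4 * phi (r' 4) := by
          rw [← rel_d, ← rel_d', heq0]
        exact mul_left_cancel₀ p24.ne' h1
      have hf4 : r 4 = r' 4 := phi_anti.injOn (mem_Ioi.2 (hr 4)) (mem_Ioi.2 (hr' 4)) hphif
      rw [heq0, hf4, d3'] at d3
      linarith only [d3, hsq]
    · exfalso
      have := diag_prod_lt p13 p24 b1' b4' b1 b4 rel_d' rel_d hgt0
      linarith only [this, hD]
  have hee : r 4 < r' 4 := pair_mono p13 p24 (hr 1) (hr 4) (hr' 1) (hr' 4) rel_d rel_d' hbb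
  have prod_d : r 1 * r 4 < r' 1 * r' 4 :=
    mul_lt_mul'' hbb hee (by linarith) (by linarith)
  -- contradiction with the Ptolemy relation
  unfold Pvec at hP hP'
  linarith only [prod_s, prod_q, prod_d, hP, hP']

set_option maxHeartbeats 1000000 in
lemma uniq_lam1 {m1 m2 m3 m4 : ℝ}
    (hm1 : 0 < m1) (hm2 : 0 < m2) (hm3 : 0 < m3) (hm4 : 0 < m4)
    {r r' : Fin 6 → ℝ} {s s' : ℝ}
    (hr : ∀ i, 0 < r i) (hr' : ∀ i, 0 < r' i)
    (hP : Pvec r = 0) (hP' : Pvec r' = 0)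
    (h : cocircularCCEqns m1 m2 m3 m4 r 1 s)
    (h' : cocircularCCEqns m1 m2 m3 m4 r' 1 s') : r = r' := by
  have hss : s = s' := by
    rcases lt_trichotomy s s' with hlt | heq | hgt
    · exact absurd (lam1_lt_false hm1 hm2 hm3 hm4 hr hr' hP hP' h h' hlt) id
    · exact heq
    · exact absurd (lam1_lt_false hm1 hm2 hm3 hm4 hr' hr hP' hP h' h hgt) id
  subst hss
  obtain ⟨hs, b0, b2, b3, b5, b1, b4⟩ := lam1_bounds hm1 hm2 hm3 hm4 hr hP h
  obtain ⟨hs', b0', b2', b3', b5', b1', b4'⟩ := lam1_bounds hm1 hm2 hm3 hm4 hr' hP' h'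
  obtain ⟨e1, e2, e3⟩ := pair_relations (hr 0) (hr 5) h.1 h.2.1
  obtain ⟨d1, d2, d3⟩ := pair_relations (hr 1) (hr 4) h.2.2.1 h.2.2.2.1
  obtain ⟨q1, q2, q3⟩ := pair_relations (hr 2) (hr 3) h.2.2.2.2.1 h.2.2.2.2.2
  obtain ⟨e1', e2', e3'⟩ := pair_relations (hr' 0) (hr' 5) h'.1 h'.2.1
  obtain ⟨d1', d2', d3'⟩ := pair_relations (hr' 1) (hr' 4) h'.2.2.1 h'.2.2.2.1
  obtain ⟨q1', q2', q3'⟩ := pair_relations (hr' 2) (hr' 3) h'.2.2.2.2.1 h'.2.2.2.2.2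
  have rel_s : m1 * m2 * phi (r 0) = m3 * m4 * phi (r 5) := e1.trans e2.symm
  have rel_s' : m1 * m2 * phi (r' 0) = m3 * m4 * phi (r' 5) := e1'.trans e2'.symm
  have rel_q : m1 * m4 * phi (r 2) = m2 * m3 * phi (r 3) := q1.trans q2.symm
  have rel_q' : m1 * m4 * phi (r' 2) = m2 * m3 * phi (r' 3) := q1'.trans q2'.symm
  have rel_d : m1 * m3 * phi (r 1) = m2 * m4 * phi (r 4) := d1.trans d2.symm
  have rel_d' : m1 * m3 * phi (r' 1) = m2 * m4 * phi (r' 4) := d1'.trans d2'.symm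
  have p12 : 0 < m1 * m2 := mul_pos hm1 hm2
  have p34 : 0 < m3 * m4 := mul_pos hm3 hm4
  have p14 : 0 < m1 * m4 := mul_pos hm1 hm4
  have p23 : 0 < m2 * m3 := mul_pos hm2 hm3
  have p13 : 0 < m1 * m3 := mul_pos hm1 hm3
  have p24 : 0 < m2 * m4 := mul_pos hm2 hm4
  have hS : gg (r 0) * gg (r 5) = gg (r' 0) * gg (r' 5) :=
    mul_left_cancel₀ (mul_pos p12 p34).ne' (e3.trans e3'.symm)
  have hQ : gg (r 2) * gg (r 3) = gg (r' 2) * gg (r' 3) :=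
    mul_left_cancel₀ (mul_pos p14 p23).ne' (q3.trans q3'.symm)
  have hD : gg (r 1) * gg (r 4) = gg (r' 1) * gg (r' 4) :=
    mul_left_cancel₀ (mul_pos p13 p24).ne' (d3.trans d3'.symm)
  have E0 : r 0 = r' 0 := by
    rcases lt_trichotomy (r 0) (r' 0) with hlt0 | heq0 | hgt0
    · have := side_prod_lt p12 p34 (hr 0) b0 (hr 5) b5 (hr' 0) b0' (hr' 5) b5'
        rel_s rel_s' hlt0
      linarith only [this, hS]
    · exact heq0
    · have := side_prod_lt p12 p34 (hr' 0) b0' (hr' 5) b5' (hr 0) b0 (hr 5) b5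
        rel_s' rel_s hgt0
      linarith only [this, hS]
  have E5 : r 5 = r' 5 := by
    apply phi_anti.injOn (mem_Ioi.2 (hr 5)) (mem_Ioi.2 (hr' 5))
    apply mul_left_cancel₀ p34.ne'
    rw [← rel_s, ← rel_s', E0]
  have E2 : r 2 = r' 2 := by
    rcases lt_trichotomy (r 2) (r' 2) with hlt0 | heq0 | hgt0
    · have := side_prod_lt p14 p23 (hr 2) b2 (hr 3) b3 (hr' 2) b2' (hr' 3) b3'
        rel_q rel_q' hlt0
      linarith only [this, hQ]
    · exact heq0
    · have := side_prod_lt p14 p23 (hr' 2) b2' (hr' 3) b3' (hr 2) b2 (hr 3) b3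
        rel_q' rel_q hgt0
      linarith only [this, hQ]
  have E3 : r 3 = r' 3 := by
    apply phi_anti.injOn (mem_Ioi.2 (hr 3)) (mem_Ioi.2 (hr' 3))
    apply mul_left_cancel₀ p23.ne'
    rw [← rel_q, ← rel_q', E2]
  have E1 : r 1 = r' 1 := by
    rcases lt_trichotomy (r 1) (r' 1) with hlt0 | heq0 | hgt0
    · have := diag_prod_lt p13 p24 b1 b4 b1' b4' rel_d rel_d' hlt0
      linarith only [this, hD]
    · exact heq0
    · have := diag_prod_lt p13 p24 b1' b4' b1 b4 rel_d' rel_d hgt0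
      linarith only [this, hD]
  have E4 : r 4 = r' 4 := by
    apply phi_anti.injOn (mem_Ioi.2 (hr 4)) (mem_Ioi.2 (hr' 4))
    apply mul_left_cancel₀ p24.ne'
    rw [← rel_d, ← rel_d', E1]
  funext i
  fin_cases i
  · exact E0
  · exact E1
  · exact E2
  · exact E3
  · exact E4
  · exact E5

/-! ### scaling -/

lemma pos_of_mul_pos_div {s d : ℝ} (hd : 0 < d) (h : 0 < s * d) : 0 < s := by
  by_contra hc; push_neg at hc; nlinarith

lemma neg_of_mul_neg_div {s d : ℝ} (hd : 0 < d) (h : s * d < 0) : s < 0 := by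
  by_contra hc; push_neg at hc; nlinarith

lemma lam_pos {m1 m2 m3 m4 : ℝ}
    (hm1 : 0 < m1) (hm2 : 0 < m2) (hm3 : 0 < m3) (hm4 : 0 < m4)
    {r : Fin 6 → ℝ} {lam sig : ℝ} (hr : ∀ i, 0 < r i)
    (h : cocircularCCEqns m1 m2 m3 m4 r lam sig) : 0 < lam := by
  by_contra hc
  push_neg at hc
  have pos0 : 0 < 1/(r 0)^3 - lam := by
    have h0 := hr 0
    have : 0 < 1/(r 0)^3 := by positivity
    linarith
  have pos1 : 0 < 1/(r 1)^3 - lam := by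
    have h1 := hr 1
    have : 0 < 1/(r 1)^3 := by positivity
    linarith
  have hsigpos : 0 < sig := by
    apply pos_of_mul_pos_div (div_pos (hr 5) (hr 0))
    rw [← h.1]
    exact mul_pos (mul_pos hm1 hm2) pos0
  have hsigneg : -sig > 0 := by
    apply pos_of_mul_pos_div (div_pos (hr 4) (hr 1))
    rw [← h.2.2.1]
    exact mul_pos (mul_pos hm1 hm3) pos1
  linarith

lemma eq_scale {p x y s lam t : ℝ} (hx : 0 < x) (hy : 0 < y) (ht : 0 < t)
    (h : p * (1/x^3 - lam) = s * (y/x)) :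
    p * (1/(t*x)^3 - lam/t^3) = (s/t^3) * ((t*y)/(t*x)) := by
  have hx0 : x ≠ 0 := hx.ne'
  have ht0 : t ≠ 0 := ht.ne'
  have h1 : (t*y)/(t*x) = y/x := mul_div_mul_left _ _ ht0
  have h2 : 1/(t*x)^3 - lam/t^3 = (1/x^3 - lam)/t^3 := by
    field_simp
  rw [h1, h2]
  calc p * ((1/x^3 - lam)/t^3) = (p * (1/x^3 - lam))/t^3 := by ring
  _ = (s * (y/x))/t^3 := by rw [h]
  _ = (s/t^3) * (y/x) := by ring

lemma eqns_scale {m1 m2 m3 m4 : ℝ} {r : Fin 6 → ℝ} {lam sig t : ℝ}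
    (hr : ∀ i, 0 < r i) (ht : 0 < t)
    (h : cocircularCCEqns m1 m2 m3 m4 r lam sig) :
    cocircularCCEqns m1 m2 m3 m4 (fun i => t * r i) (lam/t^3) (sig/t^3) := by
  obtain ⟨h1, h2, h3, h4, h5, h6⟩ := h
  refine ⟨?_, ?_, ?_, ?_, ?_, ?_⟩
  · exact eq_scale (hr 0) (hr 5) ht h1
  · exact eq_scale (hr 5) (hr 0) ht h2
  · have := eq_scale (hr 1) (hr 4) ht h3
    rw [neg_div] at this
    exact this
  · have := eq_scale (hr 4) (hr 1) ht h4
    rw [neg_div] at this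
    exact this
  · exact eq_scale (hr 2) (hr 3) ht h5
  · exact eq_scale (hr 3) (hr 2) ht h6

lemma Ivec_scale (m1 m2 m3 m4 t : ℝ) (r : Fin 6 → ℝ) :
    Ivec m1 m2 m3 m4 (fun i => t * r i) = t^2 * Ivec m1 m2 m3 m4 r := by
  simp only [Ivec]
  ring

lemma Pvec_scale (t : ℝ) (r : Fin 6 → ℝ) :
    Pvec (fun i => t * r i) = t^2 * Pvec r := by
  simp only [Pvec]
  ring

/-- Full uniqueness: any two solutions of the normalized problem coincide. -/
lemma full_uniq {m1 m2 m3 m4 : ℝ}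
    (hm1 : 0 < m1) (hm2 : 0 < m2) (hm3 : 0 < m3) (hm4 : 0 < m4)
    {r r' : Fin 6 → ℝ}
    (hr : ∀ i, 0 < r i) (hI : Ivec m1 m2 m3 m4 r = 1) (hP : Pvec r = 0)
    (hE : ∃ lam sig : ℝ, cocircularCCEqns m1 m2 m3 m4 r lam sig)
    (hr' : ∀ i, 0 < r' i) (hI' : Ivec m1 m2 m3 m4 r' = 1) (hP' : Pvec r' = 0)
    (hE' : ∃ lam sig : ℝ, cocircularCCEqns m1 m2 m3 m4 r' lam sig) :
    r = r' := by
  obtain ⟨lam, sig, h⟩ := hE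
  obtain ⟨lam', sig', h'⟩ := hE'
  have hlam : 0 < lam := lam_pos hm1 hm2 hm3 hm4 hr h
  have hlam' : 0 < lam' := lam_pos hm1 hm2 hm3 hm4 hr' h'
  set t : ℝ := lam ^ ((1:ℝ)/3) with htdef
  set t' : ℝ := lam' ^ ((1:ℝ)/3) with htdef'
  have ht : 0 < t := Real.rpow_pos_of_pos hlam _
  have ht' : 0 < t' := Real.rpow_pos_of_pos hlam' _
  have ht3 : t^3 = lam := by
    rw [htdef, ← Real.rpow_natCast (lam ^ ((1:ℝ)/3)) 3, ← Real.rpow_mul hlam.le]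
    norm_num
  have ht3' : t'^3 = lam' := by
    rw [htdef', ← Real.rpow_natCast (lam' ^ ((1:ℝ)/3)) 3, ← Real.rpow_mul hlam'.le]
    norm_num
  have hs : ∀ i, 0 < t * r i := fun i => mul_pos ht (hr i)
  have hs' : ∀ i, 0 < t' * r' i := fun i => mul_pos ht' (hr' i)
  have hPs : Pvec (fun i => t * r i) = 0 := by rw [Pvec_scale, hP]; ring
  have hPs' : Pvec (fun i => t' * r' i) = 0 := by rw [Pvec_scale, hP']; ring
  have heq : cocircularCCEqns m1 m2 m3 m4 (fun i => t * r i) 1 (sig/t^3) := by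
    have := eqns_scale hr ht h
    rwa [show lam/t^3 = 1 by rw [ht3]; exact div_self hlam.ne'] at this
  have heq' : cocircularCCEqns m1 m2 m3 m4 (fun i => t' * r' i) 1 (sig'/t'^3) := by
    have := eqns_scale hr' ht' h'
    rwa [show lam'/t'^3 = 1 by rw [ht3']; exact div_self hlam'.ne'] at this
  have key : (fun i => t * r i) = (fun i => t' * r' i) :=
    uniq_lam1 hm1 hm2 hm3 hm4 hs hs' hPs hPs' heq heq'
  have hIs : Ivec m1 m2 m3 m4 (fun i => t * r i) = t^2 := by
    rw [Ivec_scale, hI]; ring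
  have hIs' : Ivec m1 m2 m3 m4 (fun i => t' * r' i) = t'^2 := by
    rw [Ivec_scale, hI']; ring
  have htt : t^2 = t'^2 := by rw [← hIs, ← hIs', key]
  have htt' : t = t' := by
    rw [← Real.sqrt_sq ht.le, ← Real.sqrt_sq ht'.le, htt]
  funext i
  have := congrFun key i
  rw [htt'] at this
  exact mul_left_cancel₀ ht'.ne' this

/-! ### the pair functions -/

def FF (ρ a : ℝ) : ℝ := psi (ρ * phi a)

def Ks (ρ a : ℝ) : ℝ := gg a * gg (FF ρ a)

lemma FF_pos (ρ a : ℝ) : 0 < FF ρ a := psi_pos _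

lemma phi_FF (ρ a : ℝ) : phi (FF ρ a) = ρ * phi a := phi_psi _

lemma FF_mem_Ioo {ρ a : ℝ} (hρ : 0 < ρ) (ha : a ∈ Ioo (0:ℝ) 1) : FF ρ a ∈ Ioo (0:ℝ) 1 :=
  ⟨psi_pos _, psi_lt_one (mul_pos hρ (phi_pos ha.1 ha.2))⟩

lemma FF_gt_one {ρ b : ℝ} (hρ : 0 < ρ) (hb : 1 < b) : 1 < FF ρ b :=
  one_lt_psi (mul_neg_of_pos_of_neg hρ (phi_neg hb))

lemma FF_lt_FF {ρ a a' : ℝ} (hρ : 0 < ρ) (ha : 0 < a) (ha' : 0 < a') (h : a < a') :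
    FF ρ a < FF ρ a' := by
  apply psi_strictAnti
  exact mul_lt_mul_of_pos_left (phi_anti (mem_Ioi.2 ha) (mem_Ioi.2 ha') h) hρ

lemma Ks_one (ρ : ℝ) : Ks ρ 1 = 0 := by
  unfold Ks
  rw [gg_one, zero_mul]

lemma Ks_strictAntiOn {ρ : ℝ} (hρ : 0 < ρ) : StrictAntiOn (Ks ρ) (Ioo 0 1) := by
  intro a ha a' ha' h
  have hF := FF_mem_Ioo hρ ha
  have hF' := FF_mem_Ioo hρ ha'
  have g1 : gg a' < gg a := gg_anti (mem_Ioi.2 ha.1) (mem_Ioi.2 ha'.1) h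
  have hFF : FF ρ a < FF ρ a' := FF_lt_FF hρ ha.1 ha'.1 h
  have g2 : gg (FF ρ a') < gg (FF ρ a) := gg_anti (mem_Ioi.2 hF.1) (mem_Ioi.2 hF'.1) hFF
  exact mul_lt_mul'' g1 g2 (gg_pos ha'.1 ha'.2).le (gg_pos hF'.1 hF'.2).le

lemma Ks_strictMonoOn {ρ : ℝ} (hρ : 0 < ρ) : StrictMonoOn (Ks ρ) (Ioi 1) := by
  intro b hb b' hb' h
  simp only [mem_Ioi] at hb hb'
  have hE := FF_gt_one hρ hb
  have hE' := FF_gt_one hρ hb'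
  have g1 : gg b' < gg b := gg_anti (mem_Ioi.2 (by linarith)) (mem_Ioi.2 (by linarith)) h
  have hFF : FF ρ b < FF ρ b' := FF_lt_FF hρ (by linarith) (by linarith) h
  have g2 : gg (FF ρ b') < gg (FF ρ b) :=
    gg_anti (mem_Ioi.2 (by linarith)) (mem_Ioi.2 (by linarith)) hFF
  have h1 : -gg b < -gg b' := by linarith
  have h2 : -gg (FF ρ b) < -gg (FF ρ b') := by linarith
  have := mul_lt_mul'' h1 h2 (by linarith [gg_neg hb]) (by linarith [gg_neg hE])
  unfold Ks
  nlinarith [this]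

lemma phi_contOn : ContinuousOn phi (Ioi 0) := by
  apply ContinuousOn.sub
  · exact continuousOn_const.div continuousOn_id (fun x hx => ne_of_gt hx)
  · exact (continuous_pow 2).continuousOn

lemma gg_contOn : ContinuousOn gg (Ioi 0) := by
  apply ContinuousOn.sub
  · exact continuousOn_const.div ((continuous_pow 3).continuousOn)
      (fun x hx => pow_ne_zero 3 (ne_of_gt (mem_Ioi.1 hx)))
  · exact continuousOn_const

lemma FF_contOn (ρ : ℝ) : ContinuousOn (FF ρ) (Ioi 0) :=
  psi_continuous.comp_continuousOn (continuousOn_const.mul phi_contOn)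

lemma Ks_contOn (ρ : ℝ) : ContinuousOn (Ks ρ) (Ioi 0) := by
  apply ContinuousOn.mul gg_contOn
  exact gg_contOn.comp (FF_contOn ρ) (fun x _ => mem_Ioi.2 (FF_pos ρ x))

/-! ### pointwise solvability -/

lemma exist_side {ρ : ℝ} (hρ : 0 < ρ) {k : ℝ} (hk : k ∈ Ioo (0:ℝ) 1) :
    ∃ a, a ∈ Ioo (0:ℝ) 1 ∧ Ks ρ a = k := by
  set a0 : ℝ := min (1/2) (1/(1 + Real.sqrt (1/ρ))) with ha0def
  have hsq : 0 ≤ Real.sqrt (1/ρ) := Real.sqrt_nonneg _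
  have ha0pos : 0 < a0 := lt_min (by norm_num) (div_pos one_pos (by linarith))
  have ha0le : a0 ≤ 1/2 := min_le_left _ _
  have ha0lt1 : a0 < 1 := by linarith
  -- phi a0 ≥ sqrt (1/ρ)
  have hmono : 1 + Real.sqrt (1/ρ) ≤ 1/a0 := by
    have h1 : a0 ≤ 1/(1 + Real.sqrt (1/ρ)) := min_le_right _ _
    calc 1 + Real.sqrt (1/ρ) = 1/(1/(1 + Real.sqrt (1/ρ))) := by
          rw [one_div_one_div]
    _ ≤ 1/a0 := by
          apply one_div_le_one_div_of_le ha0pos h1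
  have hphi0 : Real.sqrt (1/ρ) ≤ phi a0 := by
    have h2 : a0^2 ≤ 1 := by nlinarith
    unfold phi
    linarith
  have hKsA : 1 ≤ Ks ρ a0 := by
    have hF := FF_mem_Ioo hρ ⟨ha0pos, ha0lt1⟩
    have hphiF : phi (FF ρ a0) = ρ * phi a0 := phi_FF ρ a0
    have hphia0 : 0 < phi a0 := phi_pos ha0pos ha0lt1
    have h1 : phi a0 ≤ gg a0 := phi_le_gg ha0pos ha0lt1.le
    have h2 : ρ * phi a0 ≤ gg (FF ρ a0) := by
      rw [← hphiF]; exact phi_le_gg hF.1 hF.2.le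
    have h3 : phi a0 * (ρ * phi a0) ≤ gg a0 * gg (FF ρ a0) :=
      mul_le_mul h1 h2 (by positivity) (by linarith)
    have h4 : 1 ≤ phi a0 * (ρ * phi a0) := by
      have h5 : Real.sqrt (1/ρ)^2 ≤ (phi a0)^2 := by nlinarith
      rw [Real.sq_sqrt (by positivity)] at h5
      have h6 : ρ * (1/ρ) ≤ ρ * (phi a0)^2 := mul_le_mul_of_nonneg_left h5 hρ.le
      rw [mul_one_div_cancel hρ.ne'] at h6
      nlinarith
    unfold Ks
    linarith
  have hcont : ContinuousOn (Ks ρ) (Icc a0 1) :=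
    (Ks_contOn ρ).mono (fun x hx => mem_Ioi.2 (lt_of_lt_of_le ha0pos hx.1))
  have hksub : k ∈ Ioo (Ks ρ 1) (Ks ρ a0) := by
    rw [Ks_one]
    exact ⟨hk.1, lt_of_lt_of_le hk.2 hKsA⟩
  obtain ⟨a, haI, haK⟩ := intermediate_value_Ioo' ha0lt1.le hcont hksub
  exact ⟨a, ⟨lt_trans ha0pos haI.1, haI.2⟩, haK⟩

lemma exist_diag {ρ : ℝ} (hρ : 0 < ρ) {k : ℝ} (hk : k ∈ Ioo (0:ℝ) 1) :
    ∃ b, b ∈ Ioi (1:ℝ) ∧ Ks ρ b = k := by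
  set δ : ℝ := (1 - k)/2 with hδdef
  have hδpos : 0 < δ := by simp only [hδdef]; linarith [hk.2]
  have hδhalf : δ ≤ 1/2 := by simp only [hδdef]; linarith [hk.1]
  set B : ℝ := max (1/δ) (Real.sqrt (1 + 1/(ρ*δ^2)) + 1) with hBdef
  have hB1 : 1 < B := by
    have : (2:ℝ) ≤ 1/δ := by
      rw [le_div_iff₀ hδpos]; linarith
    have := le_max_left (1/δ) (Real.sqrt (1 + 1/(ρ*δ^2)) + 1)
    linarith
  have hB0 : 0 < B := by linarith
  set E : ℝ := FF ρ B with hEdef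
  have hE1 : 1 < E := FF_gt_one hρ hB1
  have hE0 : 0 < E := by linarith
  have phiE : phi E = ρ * phi B := phi_FF ρ B
  -- 1/B^3 ≤ δ
  have hBd : 1/δ ≤ B := le_max_left _ _
  have hBinv : 1/B ≤ δ := by
    rw [div_le_iff₀ hB0]
    rw [div_le_iff₀ hδpos] at hBd
    linarith [mul_comm B δ]
  have hBinv3 : 1/B^3 ≤ δ := by
    have h1 : B ≤ B^3 := by
      nlinarith [mul_pos (mul_pos hB0 (sub_pos.2 hB1)) (show (0:ℝ) < B+1 by linarith)]
    have : 1/B^3 ≤ 1/B := one_div_le_one_div_of_le hB0 h1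
    linarith
  -- 1/E^3 ≤ δ
  have hEsq : ρ*(B^2 - 1) ≤ E^2 := by
    have e1 : E^2 - 1/E = ρ*(B^2 - 1/B) := by
      unfold phi at phiE
      linarith
    have h1 : 1/B ≤ 1 := by
      rw [div_le_one hB0]; linarith
    have h2 : ρ*(B^2 - 1) ≤ ρ*(B^2 - 1/B) := by
      apply mul_le_mul_of_nonneg_left _ hρ.le
      linarith
    have h3 : 0 < 1/E := by positivity
    linarith
  have hB2 : 1 + 1/(ρ*δ^2) ≤ B^2 := by
    have h1 : Real.sqrt (1 + 1/(ρ*δ^2)) ≤ B := by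
      have := le_max_right (1/δ) (Real.sqrt (1 + 1/(ρ*δ^2)) + 1)
      linarith
    have h2 : Real.sqrt (1 + 1/(ρ*δ^2))^2 ≤ B^2 := by
      nlinarith [Real.sqrt_nonneg (1 + 1/(ρ*δ^2))]
    rwa [Real.sq_sqrt (by positivity)] at h2
  have hEδ : 1/δ ≤ E := by
    have h1 : (1/δ)^2 ≤ E^2 := by
      have h2 : ρ*(1/(ρ*δ^2)) ≤ ρ*(B^2 - 1) := by
        apply mul_le_mul_of_nonneg_left _ hρ.le
        linarith
      have h3 : ρ*(1/(ρ*δ^2)) = (1/δ)^2 := by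
        field_simp
      linarith
    nlinarith [hδpos, hE0]
  have hEinv3 : 1/E^3 ≤ δ := by
    have hEinv : 1/E ≤ δ := by
      rw [div_le_iff₀ hE0]
      rw [div_le_iff₀ hδpos] at hEδ
      linarith [mul_comm E δ]
    have h1 : E ≤ E^3 := by
      nlinarith [mul_pos (mul_pos hE0 (sub_pos.2 hE1)) (show (0:ℝ) < E+1 by linarith)]
    have : 1/E^3 ≤ 1/E := one_div_le_one_div_of_le hE0 h1
    linarith
  -- Ks ρ B > k
  have hKsB : k < Ks ρ B := by
    have hform : Ks ρ B = (1 - 1/B^3) * (1 - 1/E^3) := by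
      unfold Ks gg
      rw [← hEdef]
      ring
    rw [hform]
    have f1 : 1 - δ ≤ 1 - 1/B^3 := by linarith
    have f2 : 1 - δ ≤ 1 - 1/E^3 := by linarith
    have hδ1 : 0 ≤ 1 - δ := by linarith
    have := mul_le_mul f1 f2 hδ1 (by linarith)
    have hk2δ : (1-δ)*(1-δ) = k + δ^2 := by
      simp only [hδdef]; ring
    nlinarith
  have hcont : ContinuousOn (Ks ρ) (Icc 1 B) :=
    (Ks_contOn ρ).mono (fun x hx => mem_Ioi.2 (lt_of_lt_of_le zero_lt_one hx.1))
  have hksub : k ∈ Ioo (Ks ρ 1) (Ks ρ B) := by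
    rw [Ks_one]
    exact ⟨hk.1, hKsB⟩
  obtain ⟨b, hbI, hbK⟩ := intermediate_value_Ioo hB1.le hcont hksub
  exact ⟨b, mem_Ioi.2 hbI.1, hbK⟩

/-! ### continuity of inverse functions -/

lemma contOn_inv_anti {f A : ℝ → ℝ} {S T : Set ℝ} (hS : IsOpen S)
    (hf : StrictAntiOn f S) (hA : ∀ k ∈ T, A k ∈ S ∧ f (A k) = k) :
    ContinuousOn A T := by
  intro k0 hk0
  obtain ⟨hAS, hfA⟩ := hA k0 hk0
  rw [Metric.continuousWithinAt_iff]
  intro ε hε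
  obtain ⟨rad, hrad, hball⟩ := Metric.isOpen_iff.1 hS (A k0) hAS
  set ε1 : ℝ := min (ε/2) (rad/2) with hε1def
  have hε1pos : 0 < ε1 := lt_min (by linarith) (by linarith)
  have hε1rad : ε1 < rad := lt_of_le_of_lt (min_le_right _ _) (by linarith)
  have hε1ε : ε1 < ε := lt_of_le_of_lt (min_le_left _ _) (by linarith)
  have hu : A k0 - ε1 ∈ S := hball (by
    rw [Metric.mem_ball, Real.dist_eq]
    rw [abs_of_nonpos (by linarith)]
    linarith)
  have hv : A k0 + ε1 ∈ S := hball (by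
    rw [Metric.mem_ball, Real.dist_eq]
    rw [abs_of_nonneg (by linarith)]
    linarith)
  have hku : k0 < f (A k0 - ε1) := by
    have := hf hu hAS (show A k0 - ε1 < A k0 by linarith)
    rwa [hfA] at this
  have hkv : f (A k0 + ε1) < k0 := by
    have := hf hAS hv (show A k0 < A k0 + ε1 by linarith)
    rwa [hfA] at this
  refine ⟨min (f (A k0 - ε1) - k0) (k0 - f (A k0 + ε1)),
    lt_min (by linarith) (by linarith), ?_⟩
  intro k hk hdist
  obtain ⟨hAS', hfA'⟩ := hA k hk
  rw [Real.dist_eq] at hdist ⊢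
  have habs := abs_lt.1 hdist
  have h1 : k < f (A k0 - ε1) := by
    have := min_le_left (f (A k0 - ε1) - k0) (k0 - f (A k0 + ε1))
    linarith [habs.2]
  have h2 : f (A k0 + ε1) < k := by
    have := min_le_right (f (A k0 - ε1) - k0) (k0 - f (A k0 + ε1))
    linarith [habs.1]
  have hl : A k0 - ε1 < A k := by
    by_contra hc
    push_neg at hc
    rcases eq_or_lt_of_le hc with he | hlt
    · rw [← he] at h1
      rw [hfA'] at h1
      exact lt_irrefl k h1
    · have := hf hAS' hu hlt
      rw [hfA'] at this
      linarith
  have hr2 : A k < A k0 + ε1 := by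
    by_contra hc
    push_neg at hc
    rcases eq_or_lt_of_le hc with he | hlt
    · rw [he] at h2
      rw [hfA'] at h2
      exact lt_irrefl k h2
    · have := hf hv hAS' hlt
      rw [hfA'] at this
      linarith
  rw [abs_lt]
  constructor <;> linarith

lemma contOn_inv_mono {f A : ℝ → ℝ} {S T : Set ℝ} (hS : IsOpen S)
    (hf : StrictMonoOn f S) (hA : ∀ k ∈ T, A k ∈ S ∧ f (A k) = k) :
    ContinuousOn A T := by
  have hS' : IsOpen ((fun x : ℝ => -x) ⁻¹' S) := hS.preimage continuous_neg
  have hf' : StrictAntiOn (fun x => f (-x)) ((fun x : ℝ => -x) ⁻¹' S) := by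
    intro x hx y hy hxy
    exact hf hy hx (by simpa using neg_lt_neg hxy)
  have hA' : ∀ k ∈ T, -A k ∈ ((fun x : ℝ => -x) ⁻¹' S) ∧ (fun x => f (-x)) (-A k) = k := by
    intro k hk
    obtain ⟨h1, h2⟩ := hA k hk
    refine ⟨by simpa using h1, by simpa using h2⟩
  have := contOn_inv_anti hS' hf' hA'
  have hAeq : A = fun k => -(-A k) := by funext k; ring
  rw [hAeq]
  exact this.neg

/-! ### the inverse functions -/

open Classical in
noncomputable def invS (ρ k : ℝ) : ℝ :=
  if h : 0 < ρ ∧ k ∈ Ioo (0:ℝ) 1 then (exist_side h.1 h.2).choose else 1/2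

open Classical in
noncomputable def invD (ρ k : ℝ) : ℝ :=
  if h : 0 < ρ ∧ k ∈ Ioo (0:ℝ) 1 then (exist_diag h.1 h.2).choose else 2

lemma invS_spec {ρ k : ℝ} (hρ : 0 < ρ) (hk : k ∈ Ioo (0:ℝ) 1) :
    invS ρ k ∈ Ioo (0:ℝ) 1 ∧ Ks ρ (invS ρ k) = k := by
  rw [invS, dif_pos ⟨hρ, hk⟩]
  exact (exist_side hρ hk).choose_spec

lemma invD_spec {ρ k : ℝ} (hρ : 0 < ρ) (hk : k ∈ Ioo (0:ℝ) 1) :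
    invD ρ k ∈ Ioi (1:ℝ) ∧ Ks ρ (invD ρ k) = k := by
  rw [invD, dif_pos ⟨hρ, hk⟩]
  exact (exist_diag hρ hk).choose_spec

lemma invS_contOn {ρ : ℝ} (hρ : 0 < ρ) : ContinuousOn (invS ρ) (Ioo 0 1) :=
  contOn_inv_anti isOpen_Ioo (Ks_strictAntiOn hρ) (fun k hk => invS_spec hρ hk)

lemma invD_contOn {ρ : ℝ} (hρ : 0 < ρ) : ContinuousOn (invD ρ) (Ioo 0 1) :=
  contOn_inv_mono isOpen_Ioi (Ks_strictMonoOn hρ) (fun k hk => invD_spec hρ hk)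

/-! ### the Ptolemy function of the parameter `k` -/

noncomputable def Pk (ρ1 ρ2 ρ3 k : ℝ) : ℝ :=
  invS ρ1 k * FF ρ1 (invS ρ1 k) + invS ρ2 k * FF ρ2 (invS ρ2 k)
    - invD ρ3 k * FF ρ3 (invD ρ3 k)

lemma Pk_contOn {ρ1 ρ2 ρ3 : ℝ} (h1 : 0 < ρ1) (h2 : 0 < ρ2) (h3 : 0 < ρ3) :
    ContinuousOn (Pk ρ1 ρ2 ρ3) (Ioo 0 1) := by
  have c1 := invS_contOn h1
  have c2 := invS_contOn h2
  have c3 := invD_contOn h3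
  have m1 : MapsTo (invS ρ1) (Ioo 0 1) (Ioi 0) :=
    fun k hk => mem_Ioi.2 ((invS_spec h1 hk).1).1
  have m2 : MapsTo (invS ρ2) (Ioo 0 1) (Ioi 0) :=
    fun k hk => mem_Ioi.2 ((invS_spec h2 hk).1).1
  have m3 : MapsTo (invD ρ3) (Ioo 0 1) (Ioi 0) :=
    fun k hk => mem_Ioi.2 (lt_trans zero_lt_one ((invD_spec h3 hk).1))
  exact ((c1.mul ((FF_contOn ρ1).comp c1 m1)).add
    (c2.mul ((FF_contOn ρ2).comp c2 m2))).sub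
    (c3.mul ((FF_contOn ρ3).comp c3 m3))

lemma Pk_neg {ρ1 ρ2 ρ3 : ℝ} (h1 : 0 < ρ1) (h2 : 0 < ρ2) (h3 : 0 < ρ3) :
    Pk ρ1 ρ2 ρ3 (7/8) < 0 := by
  have hk : (7/8 : ℝ) ∈ Ioo (0:ℝ) 1 := by norm_num
  obtain ⟨haI, haK⟩ := invS_spec h1 hk
  obtain ⟨hcI, hcK⟩ := invS_spec h2 hk
  obtain ⟨hbI, hbK⟩ := invD_spec h3 hk
  set a := invS ρ1 (7/8 : ℝ)
  set c := invS ρ2 (7/8 : ℝ)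
  set b := invD ρ3 (7/8 : ℝ)
  have hfI := FF_mem_Ioo h1 haI
  have hdI := FF_mem_Ioo h2 hcI
  have hb1 : 1 < b := hbI
  have heI := FF_gt_one h3 hb1
  set f := FF ρ1 a
  set d := FF ρ2 c
  set e := FF ρ3 b
  -- side products are < 1
  have hside1 : a * f < 1 := by nlinarith [haI.1, haI.2, hfI.1, hfI.2]
  have hside2 : c * d < 1 := by nlinarith [hcI.1, hcI.2, hdI.1, hdI.2]
  -- diagonal factors
  have hb0 : 0 < b := by linarith
  have he0 : 0 < e := by linarith
  have prodeq : (1 - 1/b^3) * (1 - 1/e^3) = 7/8 := by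
    have h := hbK
    unfold Ks gg at h
    linear_combination h
  have hb3 : 1 < b^3 := one_lt_pow₀ hb1 (by norm_num)
  have he3 : 1 < e^3 := one_lt_pow₀ heI (by norm_num)
  have hfb0 : 0 < 1 - 1/b^3 := by
    have : 1/b^3 < 1 := by rw [div_lt_one (by positivity)]; exact hb3
    linarith
  have hfe0 : 0 < 1 - 1/e^3 := by
    have : 1/e^3 < 1 := by rw [div_lt_one (by positivity)]; exact he3
    linarith
  have hfblt : 1 - 1/b^3 < 1 := by
    have : 0 < 1/b^3 := by positivity
    linarith
  have hfelt : 1 - 1/e^3 < 1 := by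
    have : 0 < 1/e^3 := by positivity
    linarith
  have hfb78 : 7/8 < 1 - 1/b^3 := by
    have := mul_lt_mul_of_pos_left hfelt hfb0
    rw [mul_one] at this
    linarith
  have hfe78 : 7/8 < 1 - 1/e^3 := by
    have := mul_lt_mul_of_pos_right hfblt hfe0
    rw [one_mul] at this
    linarith
  have hb2 : 2 < b := by
    by_contra hc
    push_neg at hc
    have h8 : b^3 ≤ 8 := by
      have := pow_le_pow_left₀ hb0.le hc 3
      norm_num at this
      linarith
    have h1 : 1/b^3 < 1/8 := by linarith
    rw [div_lt_div_iff₀ (by positivity) (by norm_num)] at h1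
    linarith
  have he2 : 2 < e := by
    by_contra hc
    push_neg at hc
    have h8 : e^3 ≤ 8 := by
      have := pow_le_pow_left₀ he0.le hc 3
      norm_num at this
      linarith
    have h1 : 1/e^3 < 1/8 := by linarith
    rw [div_lt_div_iff₀ (by positivity) (by norm_num)] at h1
    linarith
  have hbe : 4 < b * e := by nlinarith
  unfold Pk
  have : a * f + c * d - b * e < 1 + 1 - 4 := by
    linarith
  linarith

/-! ### behaviour for small `k` -/

lemma gg_le_imp_lower {x t : ℝ} (hx : 0 < x) (ht0 : 0 < t) (ht1 : t < 1)
    (h : gg x ≤ t) : 1 - t ≤ x := by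
  have h1 : 1/x^3 ≤ 1 + t := by unfold gg at h; linarith
  have hx3 : 0 < x^3 := by positivity
  have h2 : 1 ≤ (1+t) * x^3 := by
    rw [div_le_iff₀ hx3] at h1
    linarith
  have ht2 : t^2 ≤ 1 := by nlinarith
  have h3 : (1-t)^3 * (1+t) ≤ 1 := by
    nlinarith [mul_nonneg ht0.le (by nlinarith : (0:ℝ) ≤ 2 - 2*t^2 + t^3)]
  have h4 : (1-t)^3 ≤ x^3 := by nlinarith
  by_contra hc
  push_neg at hc
  have := pow_lt_pow_left₀ hc hx.le (by norm_num : 3 ≠ 0)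
  linarith

lemma side_lower {ρ k a : ℝ} (hρ : 0 < ρ) (hk : k ∈ Ioo (0:ℝ) 1)
    (ha : a ∈ Ioo (0:ℝ) 1) (hKs : Ks ρ a = k) :
    1 - (Real.sqrt k + max ρ (1/ρ) * phi (1 - Real.sqrt k)) ≤ a ∧
    1 - (Real.sqrt k + max ρ (1/ρ) * phi (1 - Real.sqrt k)) ≤ FF ρ a := by
  set sk := Real.sqrt k with hskdef
  set rr := max ρ (1/ρ) with hrrdef
  have hsk0 : 0 < sk := Real.sqrt_pos.2 hk.1
  have hsk1 : sk < 1 := by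
    have h := Real.sq_sqrt hk.1.le
    nlinarith [hk.2]
  have hskk : sk * sk = k := Real.mul_self_sqrt hk.1.le
  have hf : FF ρ a ∈ Ioo (0:ℝ) 1 := FF_mem_Ioo hρ ha
  set f := FF ρ a with hfdef
  have prodeq : gg a * gg f = k := hKs
  have phiF : phi f = ρ * phi a := phi_FF ρ a
  have phia_pos : 0 < phi a := phi_pos ha.1 ha.2
  have phif_pos : 0 < phi f := phi_pos hf.1 hf.2
  have rr1 : ρ ≤ rr := le_max_left _ _
  have rr2 : 1/ρ ≤ rr := le_max_right _ _
  have rr0 : 0 < rr := lt_of_lt_of_le hρ rr1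
  have phisk_pos : 0 < phi (1 - sk) := phi_pos (by linarith) (by linarith)
  have hW : sk ≤ sk + rr * phi (1 - sk) := by
    have := mul_pos rr0 phisk_pos
    linarith
  have hdic : gg a ≤ sk ∨ gg f ≤ sk := by
    by_contra hc
    push_neg at hc
    have := mul_lt_mul'' hc.1 hc.2 hsk0.le hsk0.le
    rw [prodeq, hskk] at this
    exact lt_irrefl k this
  rcases hdic with hga | hgf
  · have haw : 1 - sk ≤ a := gg_le_imp_lower ha.1 hsk0 hsk1 hga
    have hphia : phi a ≤ phi (1 - sk) :=
      phi_anti.antitoneOn (mem_Ioi.2 (by linarith)) (mem_Ioi.2 ha.1) haw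
    have hphif : phi f ≤ rr * phi (1 - sk) := by
      rw [phiF]
      exact mul_le_mul rr1 hphia phia_pos.le rr0.le
    have hfw : 1 - rr * phi (1 - sk) ≤ f := by
      have := one_sub_phi_le hf.1 hf.2.le
      linarith
    constructor <;> linarith
  · have hfw : 1 - sk ≤ f := gg_le_imp_lower hf.1 hsk0 hsk1 hgf
    have hphif : phi f ≤ phi (1 - sk) :=
      phi_anti.antitoneOn (mem_Ioi.2 (by linarith)) (mem_Ioi.2 hf.1) hfw
    have hphia : phi a ≤ rr * phi (1 - sk) := by
      have ha' : phi a = (1/ρ) * phi f := by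
        rw [phiF]
        field_simp
      rw [ha']
      exact mul_le_mul rr2 hphif phif_pos.le rr0.le
    have haw : 1 - rr * phi (1 - sk) ≤ a := by
      have := one_sub_phi_le ha.1 ha.2.le
      linarith
    constructor <;> linarith

set_option maxHeartbeats 2000000 in
lemma diag_upper {ρ k b : ℝ} (hρ : 0 < ρ) (hk : k ∈ Ioo (0:ℝ) 1)
    (hb : 1 < b) (hKs : Ks ρ b = k) :
    b * FF ρ b ≤ (1/(1 - Real.sqrt k)) *
      (1 + max ρ (1/ρ) * ((1/(1 - Real.sqrt k))^2 - (1 - Real.sqrt k))/2) := by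
  set sk := Real.sqrt k with hskdef
  set rr := max ρ (1/ρ) with hrrdef
  have hsk0 : 0 < sk := Real.sqrt_pos.2 hk.1
  have hsk1 : sk < 1 := by
    have h := Real.sq_sqrt hk.1.le
    nlinarith [hk.2]
  have hskk : sk * sk = k := Real.mul_self_sqrt hk.1.le
  set β := 1/(1 - sk) with hβdef
  have hβ1 : 1 ≤ β := by
    rw [hβdef, le_div_iff₀ (by linarith)]
    linarith
  have hβinv : 1/β = 1 - sk := by rw [hβdef, one_div_one_div]
  have rr1 : ρ ≤ rr := le_max_left _ _
  have rr2 : 1/ρ ≤ rr := le_max_right _ _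
  have rr0 : 0 < rr := lt_of_lt_of_le hρ rr1
  set e := FF ρ b with hedef
  have he : 1 < e := FF_gt_one hρ hb
  have hb0 : 0 < b := by linarith
  have he0 : 0 < e := by linarith
  have phiE : phi e = ρ * phi b := phi_FF ρ b
  have prodeq : (1 - 1/b^3) * (1 - 1/e^3) = k := by
    have h := hKs
    unfold Ks gg at h
    rw [← hedef] at h
    linear_combination h
  have hb3 : 1 < b^3 := one_lt_pow₀ hb (by norm_num)
  have he3 : 1 < e^3 := one_lt_pow₀ he (by norm_num)
  have hfb0 : 0 < 1 - 1/b^3 := by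
    have : 1/b^3 < 1 := by rw [div_lt_one (by positivity)]; exact hb3
    linarith
  have hfe0 : 0 < 1 - 1/e^3 := by
    have : 1/e^3 < 1 := by rw [div_lt_one (by positivity)]; exact he3
    linarith
  -- the monotone bound x² - 1/x ≤ β² - 1/β for 1 ≤ x ≤ β
  have hmono : ∀ x : ℝ, 1 ≤ x → x ≤ β → x^2 - 1/x ≤ β^2 - 1/β := by
    intro x hx1 hxβ
    have hx0 : 0 < x := by linarith
    have h1 : x^2 ≤ β^2 := by nlinarith
    have h2 : 1/β ≤ 1/x := one_div_le_one_div_of_le hx0 hxβ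
    linarith
  -- partner bound : if phi y = c * phi x with x ≤ β then y ≤ 1 + c (β²-1/β)/2
  have hpartner : ∀ c x y : ℝ, 0 < c → 1 < x → 1 < y → phi y = c * phi x → x ≤ β →
      y ≤ 1 + c * (β^2 - 1/β)/2 := by
    intro c x y hc hx1 hy1 hrel hxβ
    have hx0 : 0 < x := by linarith
    have hy0 : 0 < y := by linarith
    have e1 : y^2 - 1/y = c * (x^2 - 1/x) := by
      unfold phi at hrel
      linarith
    have h2y : 2*(y - 1) ≤ y^2 - 1/y := by
      have hy2 : 1/y ≤ 1 := by rw [div_le_one hy0]; linarith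
      nlinarith [sq_nonneg (y - 1)]
    have h3 : x^2 - 1/x ≤ β^2 - 1/β := hmono x hx1.le hxβ
    have h4 : c * (x^2 - 1/x) ≤ c * (β^2 - 1/β) := mul_le_mul_of_nonneg_left h3 hc.le
    linarith
  -- the factor dichotomy
  have hdic : 1 - 1/b^3 ≤ sk ∨ 1 - 1/e^3 ≤ sk := by
    by_contra hc
    push_neg at hc
    have := mul_lt_mul'' hc.1 hc.2 hsk0.le hsk0.le
    rw [prodeq, hskk] at this
    exact lt_irrefl k this
  -- the upper bound for a factor-small variable
  have hsmall : ∀ x : ℝ, 1 < x → 1 - 1/x^3 ≤ sk → x ≤ β := by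
    intro x hx1 hfx
    have hx0 : 0 < x := by linarith
    have hxx3 : x ≤ x^3 := by
      nlinarith [mul_pos (mul_pos hx0 (sub_pos.2 hx1)) (show (0:ℝ) < x+1 by linarith)]
    have h1 : 1/x^3 ≤ 1/x := one_div_le_one_div_of_le hx0 hxx3
    have h2 : 1 - sk ≤ 1/x := by linarith
    rw [hβdef, le_div_iff₀ (by linarith)]
    have h3 := mul_le_mul_of_nonneg_left h2 hx0.le
    rw [mul_one_div, div_self hx0.ne'] at h3
    linarith
  have hβμ0 : 0 ≤ β^2 - 1/β := by
    have hb2 : (1:ℝ) ≤ β^2 := by nlinarith [hβ1]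
    have hbi : 1/β ≤ 1 := by
      rw [div_le_one (by linarith)]
      exact hβ1
    linarith
  rcases hdic with hcase | hcase
  · have hbβ : b ≤ β := hsmall b hb hcase
    have heμ : e ≤ 1 + ρ * (β^2 - 1/β)/2 := hpartner ρ b e hρ hb he phiE hbβ
    have heμ' : e ≤ 1 + rr * (β^2 - 1/β)/2 := by
      have := mul_le_mul_of_nonneg_right rr1 hβμ0
      linarith
    have hfinal : b * e ≤ β * (1 + rr * (β^2 - 1/β)/2) :=
      mul_le_mul hbβ heμ' he0.le (by linarith)
    rw [hβinv] at hfinal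
    exact hfinal
  · have heβ : e ≤ β := hsmall e he hcase
    have hrel' : phi b = (1/ρ) * phi e := by rw [phiE]; field_simp
    have hbμ : b ≤ 1 + (1/ρ) * (β^2 - 1/β)/2 :=
      hpartner (1/ρ) e b (by positivity) he hb hrel' heβ
    have hbμ' : b ≤ 1 + rr * (β^2 - 1/β)/2 := by
      have := mul_le_mul_of_nonneg_right rr2 hβμ0
      linarith
    have hfinal : b * e ≤ (1 + rr * (β^2 - 1/β)/2) * β :=
      mul_le_mul hbμ' heβ he0.le (by linarith)
    rw [hβinv] at hfinal
    linarith [hfinal]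

/-! ### a point with positive Ptolemy value -/

set_option maxHeartbeats 2000000 in
lemma exists_k1 {ρ1 ρ2 ρ3 : ℝ} (h1 : 0 < ρ1) (h2 : 0 < ρ2) (h3 : 0 < ρ3) :
    ∃ k1 : ℝ, k1 ∈ Ioo (0:ℝ) (7/8) ∧ 0 < Pk ρ1 ρ2 ρ3 k1 := by
  set rr1 := max ρ1 (1/ρ1) with hrr1
  set rr2 := max ρ2 (1/ρ2) with hrr2
  set rr3 := max ρ3 (1/ρ3) with hrr3
  have hsqrt : Tendsto (fun k : ℝ => Real.sqrt k) (𝓝[>] 0) (𝓝 0) := by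
    have := (Real.continuous_sqrt.tendsto 0)
    rw [Real.sqrt_zero] at this
    exact this.mono_left nhdsWithin_le_nhds
  have hphi1 : ContinuousAt phi 1 := by
    have : ContinuousAt (fun x : ℝ => 1/x - x^2) 1 :=
      (continuousAt_const.div continuousAt_id one_ne_zero).sub
        ((continuous_pow 2).continuousAt)
    exact this
  have hphicomp : Tendsto (fun k : ℝ => phi (1 - Real.sqrt k)) (𝓝[>] 0) (𝓝 0) := by
    have h0 : Tendsto (fun k : ℝ => 1 - Real.sqrt k) (𝓝[>] 0) (𝓝 1) := by
      have := (tendsto_const_nhds (x := (1:ℝ)) (f := 𝓝[>] (0:ℝ))).sub hsqrt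
      simpa using this
    have := hphi1.tendsto.comp h0
    rwa [phi_one] at this
  have hWtendsto : ∀ rr : ℝ, Tendsto (fun k : ℝ => Real.sqrt k + rr * phi (1 - Real.sqrt k))
      (𝓝[>] 0) (𝓝 0) := by
    intro rr
    have := hsqrt.add ((tendsto_const_nhds (x := rr)).mul hphicomp)
    simpa using this
  have hβtendsto : Tendsto (fun k : ℝ => 1/(1 - Real.sqrt k)) (𝓝[>] 0) (𝓝 1) := by
    have h0 : Tendsto (fun k : ℝ => 1 - Real.sqrt k) (𝓝[>] 0) (𝓝 1) := by
      have := (tendsto_const_nhds (x := (1:ℝ)) (f := 𝓝[>] (0:ℝ))).sub hsqrt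
      simpa using this
    have := h0.inv₀ one_ne_zero
    simp only [inv_one] at this
    simpa [one_div] using this
  have hsub : Tendsto (fun k : ℝ => 1 - Real.sqrt k) (𝓝[>] 0) (𝓝 1) := by
    have := (tendsto_const_nhds (x := (1:ℝ)) (f := 𝓝[>] (0:ℝ))).sub hsqrt
    simpa using this
  have hDtendsto : Tendsto (fun k : ℝ => (1/(1 - Real.sqrt k)) *
      (1 + rr3 * ((1/(1 - Real.sqrt k))^2 - (1 - Real.sqrt k))/2)) (𝓝[>] 0) (𝓝 1) := by
    have hsq : Tendsto (fun k : ℝ => (1/(1 - Real.sqrt k))^2) (𝓝[>] 0) (𝓝 1) := by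
      have := hβtendsto.pow 2
      simpa using this
    have hmain := hβtendsto.mul
      ((tendsto_const_nhds (x := (1:ℝ))).add
        (((tendsto_const_nhds (x := rr3)).mul ((hsq.sub hsub).div_const 2))))
    have : (1:ℝ) * (1 + rr3 * ((1 - 1)/2)) = 1 := by ring
    rw [this] at hmain
    convert hmain using 2
    ring
  have E1 : ∀ᶠ k in 𝓝[>] (0:ℝ), Real.sqrt k + rr1 * phi (1 - Real.sqrt k) < 1/8 :=
    (hWtendsto rr1).eventually_lt_const (by norm_num)
  have E2 : ∀ᶠ k in 𝓝[>] (0:ℝ), Real.sqrt k + rr2 * phi (1 - Real.sqrt k) < 1/8 :=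
    (hWtendsto rr2).eventually_lt_const (by norm_num)
  have E3 : ∀ᶠ k in 𝓝[>] (0:ℝ), (1/(1 - Real.sqrt k)) *
      (1 + rr3 * ((1/(1 - Real.sqrt k))^2 - (1 - Real.sqrt k))/2) < 3/2 :=
    hDtendsto.eventually_lt_const (by norm_num)
  have E4 : ∀ᶠ k in 𝓝[>] (0:ℝ), k ∈ Ioo (0:ℝ) (7/8) := by
    have hmem : Ioo (0:ℝ) (7/8) ∈ 𝓝[>] (0:ℝ) :=
      Ioo_mem_nhdsGT_of_mem ⟨le_refl 0, by norm_num⟩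
    exact Filter.eventually_of_mem hmem (fun x hx => hx)
  obtain ⟨k1, hk1W1, hk1W2, hk1D, hk1mem⟩ := (E1.and (E2.and (E3.and E4))).exists
  refine ⟨k1, hk1mem, ?_⟩
  have hk1 : k1 ∈ Ioo (0:ℝ) 1 := ⟨hk1mem.1, by linarith [hk1mem.2]⟩
  obtain ⟨haI, haK⟩ := invS_spec h1 hk1
  obtain ⟨hcI, hcK⟩ := invS_spec h2 hk1
  obtain ⟨hbI, hbK⟩ := invD_spec h3 hk1
  obtain ⟨hal, hfl⟩ := side_lower h1 hk1 haI haK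
  obtain ⟨hcl, hdl⟩ := side_lower h2 hk1 hcI hcK
  have hbu := diag_upper h3 hk1 (mem_Ioi.1 hbI) hbK
  set a := invS ρ1 k1
  set c := invS ρ2 k1
  set b := invD ρ3 k1
  set f := FF ρ1 a
  set d := FF ρ2 c
  set e := FF ρ3 b
  have ha78 : (7:ℝ)/8 ≤ a := by linarith
  have hf78 : (7:ℝ)/8 ≤ f := by linarith
  have hc78 : (7:ℝ)/8 ≤ c := by linarith
  have hd78 : (7:ℝ)/8 ≤ d := by linarith
  have haf : (7:ℝ)/8 * (7/8) ≤ a * f := mul_le_mul ha78 hf78 (by norm_num) (by linarith)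
  have hcd : (7:ℝ)/8 * (7/8) ≤ c * d := mul_le_mul hc78 hd78 (by norm_num) (by linarith)
  have hbe : b * e < 3/2 := lt_of_le_of_lt hbu hk1D
  unfold Pk
  have h78 : ((7:ℝ)/8) * (7/8) = 49/64 := by norm_num
  rw [h78] at haf hcd
  show 0 < a * f + c * d - b * e
  linarith

/-! ### constructing the equations from the pair data -/

lemma eq_of_sq_eq {u v : ℝ} (hu : 0 ≤ u) (hv : 0 ≤ v) (h : u^2 = v^2) : u = v := by
  rw [← Real.sqrt_sq hu, ← Real.sqrt_sq hv, h]

lemma pair_eqs_side {p q a k σ : ℝ} (hp : 0 < p) (hq : 0 < q)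
    (ha : a ∈ Ioo (0:ℝ) 1) (hk : k ∈ Ioo (0:ℝ) 1)
    (hKs : Ks (p/q) a = k) (hσ0 : 0 ≤ σ) (hσ2 : σ^2 = p*q*k) :
    p * (1/a^3 - 1) = σ * (FF (p/q) a / a) ∧
    q * (1/(FF (p/q) a)^3 - 1) = σ * (a / FF (p/q) a) := by
  have hρ : 0 < p/q := div_pos hp hq
  have hf : FF (p/q) a ∈ Ioo (0:ℝ) 1 := FF_mem_Ioo hρ ha
  set f := FF (p/q) a with hfdef
  have ha0 : a ≠ 0 := ha.1.ne'
  have hf0 : f ≠ 0 := hf.1.ne'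
  have phiF : phi f = (p/q) * phi a := phi_FF _ _
  have prodeq : gg a * gg f = k := hKs
  have relpq : q * phi f = p * phi a := by
    rw [phiF]
    field_simp
  have hphia : phi a = a^2 * gg a := phi_eq_sq_gg ha0
  have hphif : phi f = f^2 * gg f := phi_eq_sq_gg hf0
  have phia : 0 < phi a := phi_pos ha.1 ha.2
  have key2 : (p * phi a)^2 = (σ * (a*f))^2 := by
    calc (p * phi a)^2 = (p * phi a) * (q * phi f) := by rw [relpq]; ring
    _ = p*q*((a^2 * gg a) * (f^2 * gg f)) := by rw [hphia, hphif]; ring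
    _ = p*q*(gg a * gg f)*(a^2*f^2) := by ring
    _ = p*q*k*(a^2*f^2) := by rw [prodeq]
    _ = (σ * (a*f))^2 := by rw [← hσ2]; ring
  have key : p * phi a = σ * (a*f) :=
    eq_of_sq_eq (by positivity) (mul_nonneg hσ0 (by nlinarith [ha.1, hf.1])) key2
  have keyf : q * phi f = σ * (a*f) := by rw [relpq, key]
  have hgga : gg a = 1/a^3 - 1 := rfl
  have hggf : gg f = 1/f^3 - 1 := rfl
  constructor
  · have hstep : a^2 * (p * (1/a^3 - 1)) = a^2 * (σ * (f/a)) := by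
      calc a^2 * (p * (1/a^3 - 1)) = p * (a^2 * (1/a^3 - 1)) := by ring
      _ = p * phi a := by rw [hphia, hgga]
      _ = σ * (a*f) := key
      _ = a^2 * (σ * (f/a)) := by field_simp
    exact mul_left_cancel₀ (pow_ne_zero 2 ha0) hstep
  · have hstep : f^2 * (q * (1/f^3 - 1)) = f^2 * (σ * (a/f)) := by
      calc f^2 * (q * (1/f^3 - 1)) = q * (f^2 * (1/f^3 - 1)) := by ring
      _ = q * phi f := by rw [hphif, hggf]
      _ = σ * (a*f) := keyf
      _ = f^2 * (σ * (a/f)) := by field_simp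
    exact mul_left_cancel₀ (pow_ne_zero 2 hf0) hstep

lemma pair_eqs_diag {p q b k σ : ℝ} (hp : 0 < p) (hq : 0 < q)
    (hb : 1 < b) (hk : k ∈ Ioo (0:ℝ) 1)
    (hKs : Ks (p/q) b = k) (hσ0 : 0 ≤ σ) (hσ2 : σ^2 = p*q*k) :
    p * (1/b^3 - 1) = -σ * (FF (p/q) b / b) ∧
    q * (1/(FF (p/q) b)^3 - 1) = -σ * (b / FF (p/q) b) := by
  have hρ : 0 < p/q := div_pos hp hq
  have he : 1 < FF (p/q) b := FF_gt_one hρ hb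
  set e := FF (p/q) b with hedef
  have hb0 : 0 < b := by linarith
  have he0 : 0 < e := by linarith
  have hbne : b ≠ 0 := hb0.ne'
  have hene : e ≠ 0 := he0.ne'
  have phiE : phi e = (p/q) * phi b := phi_FF _ _
  have prodeq : gg b * gg e = k := hKs
  have relpq : q * phi e = p * phi b := by
    rw [phiE]
    field_simp
  have hphib : phi b = b^2 * gg b := phi_eq_sq_gg hbne
  have hphie : phi e = e^2 * gg e := phi_eq_sq_gg hene
  have phib : phi b < 0 := phi_neg hb
  have key2 : (-(p * phi b))^2 = (σ * (b*e))^2 := by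
    calc (-(p * phi b))^2 = (p * phi b) * (q * phi e) := by rw [relpq]; ring
    _ = p*q*((b^2 * gg b) * (e^2 * gg e)) := by rw [hphib, hphie]; ring
    _ = p*q*(gg b * gg e)*(b^2*e^2) := by ring
    _ = p*q*k*(b^2*e^2) := by rw [prodeq]
    _ = (σ * (b*e))^2 := by rw [← hσ2]; ring
  have key' : -(p * phi b) = σ * (b*e) :=
    eq_of_sq_eq (by nlinarith [mul_pos hp (neg_pos.2 phib)])
      (mul_nonneg hσ0 (by nlinarith [hb0, he0])) key2
  have key : p * phi b = -σ * (b*e) := by linarith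
  have keyf : q * phi e = -σ * (b*e) := by rw [relpq, key]
  have hggb : gg b = 1/b^3 - 1 := rfl
  have hgge : gg e = 1/e^3 - 1 := rfl
  constructor
  · have hstep : b^2 * (p * (1/b^3 - 1)) = b^2 * (-σ * (e/b)) := by
      calc b^2 * (p * (1/b^3 - 1)) = p * (b^2 * (1/b^3 - 1)) := by ring
      _ = p * phi b := by rw [hphib, hggb]
      _ = -σ * (b*e) := key
      _ = b^2 * (-σ * (e/b)) := by field_simp
    exact mul_left_cancel₀ (pow_ne_zero 2 hbne) hstep
  · have hstep : e^2 * (q * (1/e^3 - 1)) = e^2 * (-σ * (b/e)) := by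
      calc e^2 * (q * (1/e^3 - 1)) = q * (e^2 * (1/e^3 - 1)) := by ring
      _ = q * phi e := by rw [hphie, hgge]
      _ = -σ * (b*e) := keyf
      _ = e^2 * (-σ * (b/e)) := by field_simp
    exact mul_left_cancel₀ (pow_ne_zero 2 hene) hstep

/-! ### existence -/

lemma exist_sol {m1 m2 m3 m4 : ℝ}
    (hm1 : 0 < m1) (hm2 : 0 < m2) (hm3 : 0 < m3) (hm4 : 0 < m4) :
    ∃ r : Fin 6 → ℝ, (∀ i, 0 < r i) ∧ Ivec m1 m2 m3 m4 r = 1 ∧ Pvec r = 0 ∧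
      ∃ lam sig : ℝ, cocircularCCEqns m1 m2 m3 m4 r lam sig := by
  have hρ1 : 0 < (m1*m2)/(m3*m4) := by positivity
  have hρ2 : 0 < (m1*m4)/(m2*m3) := by positivity
  have hρ3 : 0 < (m1*m3)/(m2*m4) := by positivity
  obtain ⟨k1, hk1mem, hk1pos⟩ := exists_k1 hρ1 hρ2 hρ3
  have hsub : Icc k1 (7/8 : ℝ) ⊆ Ioo (0:ℝ) 1 := fun x hx =>
    ⟨lt_of_lt_of_le hk1mem.1 hx.1, lt_of_le_of_lt hx.2 (by norm_num)⟩
  have hcont := (Pk_contOn hρ1 hρ2 hρ3).mono hsub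
  obtain ⟨k, hkIcc, hkP⟩ := intermediate_value_Icc' hk1mem.2.le hcont
    ⟨(Pk_neg hρ1 hρ2 hρ3).le, hk1pos.le⟩
  have hk : k ∈ Ioo (0:ℝ) 1 := hsub hkIcc
  unfold Pk at hkP
  obtain ⟨haI, haK⟩ := invS_spec hρ1 hk
  obtain ⟨hcI, hcK⟩ := invS_spec hρ2 hk
  obtain ⟨hbI, hbK⟩ := invD_spec hρ3 hk
  set a := invS ((m1*m2)/(m3*m4)) k with hadef
  set c := invS ((m1*m4)/(m2*m3)) k with hcdef
  set b := invD ((m1*m3)/(m2*m4)) k with hbdef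
  set f := FF ((m1*m2)/(m3*m4)) a with hfdef
  set d := FF ((m1*m4)/(m2*m3)) c with hddef
  set e := FF ((m1*m3)/(m2*m4)) b with hedef
  have hb1 : 1 < b := hbI
  have hfI : f ∈ Ioo (0:ℝ) 1 := FF_mem_Ioo hρ1 haI
  have hdI : d ∈ Ioo (0:ℝ) 1 := FF_mem_Ioo hρ2 hcI
  have heg : 1 < e := FF_gt_one hρ3 hb1
  set σ := Real.sqrt (m1*m2*(m3*m4)*k) with hσdef
  have hσ0 : 0 ≤ σ := Real.sqrt_nonneg _
  have hσ2 : σ^2 = m1*m2*(m3*m4)*k :=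
    Real.sq_sqrt (mul_nonneg (by positivity) hk.1.le)
  obtain ⟨E1, E2⟩ := pair_eqs_side (mul_pos hm1 hm2) (mul_pos hm3 hm4) haI hk haK hσ0 hσ2
  obtain ⟨E5, E6⟩ := pair_eqs_side (mul_pos hm1 hm4) (mul_pos hm2 hm3) hcI hk hcK hσ0
    (by rw [hσ2]; ring)
  obtain ⟨E3, E4⟩ := pair_eqs_diag (mul_pos hm1 hm3) (mul_pos hm2 hm4) hb1 hk hbK hσ0
    (by rw [hσ2]; ring)
  set s : Fin 6 → ℝ := fun i =>
    if i = 0 then a else if i = 1 then b else if i = 2 then c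
    else if i = 3 then d else if i = 4 then e else f with hsdef
  have hs0 : s 0 = a := by simp [hsdef]
  have hs1 : s 1 = b := by simp [hsdef]
  have hs2 : s 2 = c := by simp [hsdef]
  have hs3 : s 3 = d := by simp [hsdef]
  have hs4 : s 4 = e := by simp [hsdef]
  have hs5 : s 5 = f := by simp [hsdef]
  have hspos : ∀ i, 0 < s i := by
    intro i
    simp only [hsdef]
    split_ifs
    · exact haI.1
    · linarith
    · exact hcI.1
    · exact hdI.1
    · linarith
    · exact hfI.1
  have hPs : Pvec s = 0 := by
    unfold Pvec
    rw [hs0, hs1, hs2, hs3, hs4, hs5]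
    linarith [hkP]
  have heqns : cocircularCCEqns m1 m2 m3 m4 s 1 σ := by
    refine ⟨?_, ?_, ?_, ?_, ?_, ?_⟩
    · rw [hs0, hs5]; exact E1
    · rw [hs0, hs5]; exact E2
    · rw [hs1, hs4]; exact E3
    · rw [hs1, hs4]; exact E4
    · rw [hs2, hs3]; exact E5
    · rw [hs2, hs3]; exact E6
  have hI0 : 0 < Ivec m1 m2 m3 m4 s := by
    unfold Ivec
    rw [hs0, hs1, hs2, hs3, hs4, hs5]
    have t1 : 0 < m1*m2*a^2 := mul_pos (mul_pos hm1 hm2) (pow_pos haI.1 2)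
    have t2 : 0 < m1*m3*b^2 := mul_pos (mul_pos hm1 hm3) (pow_pos (by linarith) 2)
    have t3 : 0 < m1*m4*c^2 := mul_pos (mul_pos hm1 hm4) (pow_pos hcI.1 2)
    have t4 : 0 < m2*m3*d^2 := mul_pos (mul_pos hm2 hm3) (pow_pos hdI.1 2)
    have t5 : 0 < m2*m4*e^2 := mul_pos (mul_pos hm2 hm4) (pow_pos (by linarith) 2)
    have t6 : 0 < m3*m4*f^2 := mul_pos (mul_pos hm3 hm4) (pow_pos hfI.1 2)
    have hM : 0 < 1/(2*(m1 + m2 + m3 + m4)) := by positivity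
    have hsum : 0 < m1*m2*a^2 + m1*m3*b^2 + m1*m4*c^2 + m2*m3*d^2 + m2*m4*e^2 + m3*m4*f^2 := by
      linarith
    exact mul_pos hM hsum
  set t := 1/Real.sqrt (Ivec m1 m2 m3 m4 s) with htdef
  have hsqI : 0 < Real.sqrt (Ivec m1 m2 m3 m4 s) := Real.sqrt_pos.2 hI0
  have ht : 0 < t := one_div_pos.2 hsqI
  have ht2 : t^2 * Ivec m1 m2 m3 m4 s = 1 := by
    rw [htdef, div_pow, one_pow, Real.sq_sqrt hI0.le]
    exact one_div_mul_cancel hI0.ne'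
  refine ⟨fun i => t * s i, fun i => mul_pos ht (hspos i), ?_, ?_, 1/t^3, σ/t^3, ?_⟩
  · rw [Ivec_scale]
    exact ht2
  · rw [Pvec_scale, hPs]
    ring
  · have := eqns_scale hspos ht heqns
    exact this


end CoCirc

end

/-- For any positive masses there is exactly one `r ∈ (0,∞)⁶` with `I(r) = 1`
and `P(r) = 0` satisfying the co-circular central configuration equations for
some multipliers `λ, σ`: the restriction `U|𝓜⁺` has a unique critical point. -/
theorem unique_critical_point_on_Mplus (m1 m2 m3 m4 : ℝ)
    (hm1 : 0 < m1) (hm2 : 0 < m2) (hm3 : 0 < m3) (hm4 : 0 < m4) :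
    ∃! r : Fin 6 → ℝ, (∀ i, 0 < r i) ∧
      Ivec m1 m2 m3 m4 r = 1 ∧ Pvec r = 0 ∧
      ∃ lam sig : ℝ, cocircularCCEqns m1 m2 m3 m4 r lam sig := by
  obtain ⟨r, hr⟩ := CoCirc.exist_sol hm1 hm2 hm3 hm4
  refine ⟨r, hr, ?_⟩
  intro y hy
  exact CoCirc.full_uniq hm1 hm2 hm3 hm4 hy.1 hy.2.1 hy.2.2.1 hy.2.2.2
    hr.1 hr.2.1 hr.2.2.1 hr.2.2.2
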